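/- arXiv:1101.0410 — 13 statements merged into one kernel-verified Lean document; each statement's English description precedes it below -/
import Mathlib

section
/- Let n and s be positive integers with 1 ≤ s ≤ n. Let a : Fin s → (Fin n → ℝ) be a linearly independent family of vectors (the normal vectors of s hyperplanes) and let b : Fin s → ℝ. Then the number of points x ∈ {0,1}^n (i.e., x : Fin n → ℝ with every coordinate equal to 0 or 1) satisfying ∑_{j} a i j * x j = b i for every i : Fin s is at most 2^(n-s). -/
open Submodule Set

/-- For any subspace `K` of `ℝ^n` there is a coordinate set `T` of size
`finrank K` such that any element of `K` vanishing on `T` is zero. -/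
lemma exists_good_coords {n : ℕ} (K : Submodule ℝ (Fin n → ℝ)) :
    ∃ T : Finset (Fin n), T.card = Module.finrank ℝ K ∧
      ∀ x ∈ K, (∀ j ∈ T, x j = 0) → x = 0 := by
  classical
  obtain ⟨sK, hsKsub, hspan, hli⟩ := exists_linearIndependent ℝ (K : Set (Fin n → ℝ))
  rw [Submodule.span_eq] at hspan
  set e : Fin n → (Fin n → ℝ) := fun j => Pi.single j (1 : ℝ) with he
  have he_inj : Function.Injective e := by
    intro i j hij
    by_contra hne
    have h1 := congr_fun hij i
    simp [e, Pi.single_apply, hne] at h1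
  have hspan_e : Submodule.span ℝ (Set.range e) = ⊤ := by
    rw [eq_top_iff]
    intro x _
    have hx : x = ∑ j, x j • e j := by
      funext k
      simp [e, Pi.single_apply, Finset.sum_apply]
    rw [hx]
    exact Submodule.sum_mem _ fun j _ => Submodule.smul_mem _ _ (Submodule.subset_span ⟨j, rfl⟩)
  obtain ⟨B, hBt, hsKB, htB, hBli⟩ :=
    exists_linearIndepOn_id_extension hli (Set.subset_union_left : sK ⊆ sK ∪ Set.range e)
  have hspanB : Submodule.span ℝ B = ⊤ := by
    rw [eq_top_iff, ← hspan_e]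
    exact Submodule.span_le.2 fun x hx => htB (Or.inr hx)
  -- finiteness and cardinalities
  haveI : Finite ↥B := hBli.finite
  have hBfin : B.Finite := Set.finite_coe_iff.mp inferInstance
  have hsKfin : sK.Finite := hBfin.subset hsKB
  haveI : Fintype ↥B := hBfin.fintype
  haveI : Fintype ↥sK := hsKfin.fintype
  have hBcard : B.toFinset.card = n := by
    have := finrank_span_set_eq_card (s := B) hBli
    rw [hspanB, finrank_top, Module.finrank_pi] at this
    simpa using this.symm
  have hsKcard : sK.toFinset.card = Module.finrank ℝ K := by
    have := finrank_span_set_eq_card (s := sK) hli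
    rw [hspan] at this
    exact this.symm
  have hdle : Module.finrank ℝ K ≤ n := by
    have := Finset.card_le_card (Set.toFinset_subset_toFinset.2 hsKB)
    omega
  -- the coordinate sets
  set S : Finset (Fin n) := Finset.univ.filter (fun j => e j ∈ B \ sK) with hS
  have himg : e '' (S : Set (Fin n)) = B \ sK := by
    ext x
    constructor
    · rintro ⟨j, hj, rfl⟩
      simpa [hS] using hj
    · intro hx
      obtain ⟨j, rfl⟩ : x ∈ Set.range e := by
        rcases hBt hx.1 with h | h
        · exact absurd h hx.2
        · exact h
      exact ⟨j, by simpa [hS] using hx, rfl⟩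
  have hScard : S.card = n - Module.finrank ℝ K := by
    have h1 : (e '' (S : Set (Fin n))).ncard = S.card := by
      rw [Set.ncard_image_of_injective _ he_inj, Set.ncard_coe_finset]
    rw [himg] at h1
    have h2 : (B \ sK).ncard = B.ncard - sK.ncard := Set.ncard_diff hsKB hsKfin
    have hBn : B.ncard = n := by rw [Set.ncard_eq_toFinset_card' B]; exact hBcard
    have hsn : sK.ncard = Module.finrank ℝ K := by
      rw [Set.ncard_eq_toFinset_card' sK]; exact hsKcard
    omega
  refine ⟨Sᶜ, ?_, ?_⟩
  · rw [Finset.card_compl, Fintype.card_fin, hScard]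
    omega
  · intro x hxK hxT
    -- x is supported on S, hence lies in span (B \ sK)
    have hxS : x ∈ Submodule.span ℝ (B \ sK) := by
      have hx : x = ∑ j ∈ S, x j • e j := by
        funext k
        rw [Finset.sum_apply]
        by_cases hk : k ∈ S
        · rw [Finset.sum_eq_single k (fun j _ hjk => by
            simp [e, Pi.single_apply, Ne.symm hjk]) (fun h => absurd hk h)]
          simp [e]
        · rw [hxT k (Finset.mem_compl.2 hk)]
          exact (Finset.sum_eq_zero fun j hj => by
            have hkj : k ≠ j := fun h => hk (h ▸ hj)
            simp [e, Pi.single_apply, hkj]).symm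
      rw [hx]
      exact Submodule.sum_mem _ fun j hj =>
        Submodule.smul_mem _ _ (Submodule.subset_span (himg ▸ ⟨j, hj, rfl⟩))
    have hdisj : Disjoint (Submodule.span ℝ sK) (Submodule.span ℝ (B \ sK)) := by
      have hpre : Disjoint ((Subtype.val : B → _) ⁻¹' sK)
          ((Subtype.val : B → _) ⁻¹' (B \ sK)) :=
        (disjoint_sdiff_self_right : Disjoint sK (B \ sK)).preimage _
      have h1 : (Subtype.val : B → _) '' ((Subtype.val : B → _) ⁻¹' sK) = sK := by
        rw [Subtype.image_preimage_coe]
        exact Set.inter_eq_self_of_subset_right hsKB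
      have h2 : (Subtype.val : B → _) '' ((Subtype.val : B → _) ⁻¹' (B \ sK)) = B \ sK := by
        rw [Subtype.image_preimage_coe]
        exact Set.inter_eq_self_of_subset_right Set.diff_subset
      have := (show LinearIndependent ℝ (Subtype.val : B → _) from hBli).disjoint_span_image hpre
      rwa [h1, h2] at this
    rw [← hspan] at hxK
    exact Submodule.disjoint_def.mp hdisj x hxK hxS

/-- Theorem 3.3: the intersection of `s` hyperplanes in `ℝ^n` with linearly
independent normal vectors contains at most `2^(n-s)` vertices of the hypercube. -/
theorem stmt0 (n s : ℕ) (hs : 1 ≤ s) (hsn : s ≤ n)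
    (a : Fin s → (Fin n → ℝ)) (ha : LinearIndependent ℝ a) (b : Fin s → ℝ) :
    {x : Fin n → ℝ | (∀ i, x i = 0 ∨ x i = 1) ∧ ∀ i, ∑ j, a i j * x j = b i}.ncard
      ≤ 2 ^ (n - s) := by
  classical
  set A : Matrix (Fin s) (Fin n) ℝ := Matrix.of a with hA
  set K := LinearMap.ker A.mulVecLin with hKdef
  have hrank : A.rank = s := by
    have := ha.rank_matrix (M := A)
    simpa using this
  have hker : Module.finrank ℝ K = n - s := by
    show Module.finrank ℝ (LinearMap.ker A.mulVecLin) = n - s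
    have h1 := A.mulVecLin.finrank_range_add_finrank_ker
    rw [Module.finrank_pi] at h1
    have h2 : Module.finrank ℝ (LinearMap.range A.mulVecLin) = s := hrank
    simp only [Fintype.card_fin] at h1
    omega
  obtain ⟨T, hTcard, hT⟩ := exists_good_coords K
  rw [hker] at hTcard
  set V : Set (Fin n → ℝ) :=
    {x : Fin n → ℝ | (∀ i, x i = 0 ∨ x i = 1) ∧ ∀ i, ∑ j, a i j * x j = b i} with hV
  have key : V.ncard ≤ Nat.card (T → Bool) := by
    rw [← Nat.card_coe_set_eq]
    exact Nat.card_le_card_of_injective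
        (fun x (j : T) => decide (x.1 j.1 = 1)) (by
          rintro ⟨x, hx01, hxb⟩ ⟨y, hy01, hyb⟩ hxy
          have hcoord : ∀ j ∈ T, x j = y j := by
            intro j hj
            have h := congr_fun hxy ⟨j, hj⟩
            simp only [decide_eq_decide] at h
            rcases hx01 j with h1 | h1 <;> rcases hy01 j with h2 | h2 <;>
              simp [h1, h2] at h ⊢
          have hmem : x - y ∈ K := by
            rw [hKdef, LinearMap.mem_ker]
            funext i
            have : A.mulVecLin (x - y) i = (∑ j, a i j * x j) - (∑ j, a i j * y j) := by
              simp [Matrix.mulVecLin_apply, Matrix.mulVec, dotProduct, hA,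
                Finset.sum_sub_distrib, mul_sub]
            rw [this, hxb i, hyb i, sub_self]
            rfl
          have hzero : x - y = 0 := hT _ hmem (by
            intro j hj
            simp [hcoord j hj])
          ext1
          exact sub_eq_zero.mp hzero)
  have hcardBool : Nat.card (T → Bool) = 2 ^ T.card := by
    simp [Nat.card_eq_fintype_card, Fintype.card_fun]
  rw [hcardBool, hTcard] at key
  exact key
end

section
/- Let n and s be integers with 1 ≤ s ≤ n, and let S be a subset of {0,1}^n ⊆ (Fin n → ℝ) with more than 2^(n-s) elements. Then the dimension of the affine span of S, i.e., Module.finrank ℝ of the direction of affineSpan ℝ S, is at least n - s + 1. -/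
open Module

/-- If a submodule `V` of `ℝ^n` has rank at most `d`, there is a set `T` of at most `d`
coordinates such that vanishing on `T` forces an element of `V` to be zero. -/
lemma exists_proj (n : ℕ) : ∀ (d : ℕ) (V : Submodule ℝ (Fin n → ℝ)),
    Module.finrank ℝ V ≤ d →
    ∃ T : Finset (Fin n), T.card ≤ d ∧ ∀ v ∈ V, (∀ i ∈ T, v i = 0) → v = 0 := by
  intro d
  induction d with
  | zero =>
    intro V hV
    refine ⟨∅, le_rfl, fun v hv _ => ?_⟩
    have : V = ⊥ := Submodule.finrank_eq_zero.mp (Nat.le_zero.mp hV)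
    simpa [this] using hv
  | succ d ih =>
    intro V hV
    by_cases hb : V = ⊥
    · exact ⟨∅, Nat.zero_le _, fun v hv _ => by simpa [hb] using hv⟩
    · obtain ⟨v, hvV, hv0⟩ := Submodule.exists_mem_ne_zero_of_ne_bot hb
      obtain ⟨i, hi⟩ : ∃ i, v i ≠ 0 := by
        by_contra h
        push_neg at h
        exact hv0 (funext h)
      set V' := V ⊓ LinearMap.ker (LinearMap.proj (R := ℝ) (φ := fun _ : Fin n => ℝ) i)
        with hV'
      have hlt : V' < V := by
        refine lt_of_le_of_ne inf_le_left ?_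
        intro he
        have hm : v ∈ V' := he ▸ hvV
        exact hi hm.2
      have hrk : Module.finrank ℝ V' ≤ d := by
        have := Submodule.finrank_lt_finrank_of_lt hlt
        omega
      obtain ⟨T', hT'c, hT'⟩ := ih V' hrk
      refine ⟨insert i T', (Finset.card_insert_le _ _).trans (by omega), ?_⟩
      intro w hw hwz
      have hwi : w i = 0 := hwz i (Finset.mem_insert_self _ _)
      exact hT' w ⟨hw, hwi⟩ (fun j hj => hwz j (Finset.mem_insert_of_mem hj))

/-- A set of 0/1 vectors whose affine span has dimension at most `d`
has at most `2 ^ d` elements. -/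
lemma key (n d : ℕ) (S : Set (Fin n → ℝ)) (hS : ∀ x ∈ S, ∀ i, x i = 0 ∨ x i = 1)
    (hd : Module.finrank ℝ (affineSpan ℝ S).direction ≤ d) : S.ncard ≤ 2 ^ d := by
  classical
  obtain ⟨T, hTc, hT⟩ := exists_proj n d _ hd
  have hinj : Set.InjOn (fun x => fun i : T => decide (x i.1 = 1)) S := by
    intro x hx y hy hxy
    have hsub : x - y ∈ (affineSpan ℝ S).direction := by
      have := AffineSubspace.vsub_mem_direction (subset_affineSpan ℝ S hx)
        (subset_affineSpan ℝ S hy)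
      simpa using this
    have hz : ∀ i ∈ T, (x - y) i = 0 := by
      intro i hiT
      have heq : decide (x i = 1) = decide (y i = 1) := congrFun hxy ⟨i, hiT⟩
      rcases hS x hx i with h1 | h1 <;> rcases hS y hy i with h2 | h2 <;>
        simp [h1, h2] <;> norm_num [h1, h2] at heq
    have hxy0 : x - y = 0 := hT _ hsub hz
    exact sub_eq_zero.mp hxy0
  have hle : S.ncard ≤ (Set.univ : Set (T → Bool)).ncard :=
    Set.ncard_le_ncard_of_injOn _ (fun _ _ => trivial) hinj (Set.finite_univ)
  calc S.ncard ≤ (Set.univ : Set (T → Bool)).ncard := hle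
    _ = 2 ^ T.card := by
        rw [Set.ncard_univ, Nat.card_eq_fintype_card]
        simp [Fintype.card_fun]
    _ ≤ 2 ^ d := Nat.pow_le_pow_right (by norm_num) hTc

/-- Theorem 3.2: a set of more than `2^(n-s)` vertices of the hypercube has
affine span of dimension at least `n - s + 1`. -/
theorem stmt1 (n s : ℕ) (hs : 1 ≤ s) (hsn : s ≤ n)
    (S : Set (Fin n → ℝ)) (hS : ∀ x ∈ S, ∀ i, x i = 0 ∨ x i = 1)
    (hcard : 2 ^ (n - s) < S.ncard) :
    n - s + 1 ≤ Module.finrank ℝ (affineSpan ℝ S).direction := by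
  by_contra h
  push_neg at h
  have := key n (n - s) S hS (by omega)
  omega
end

section
/- Let n ≥ 1 and let S be a subset of {0,1}^n ⊆ (Fin n → ℝ) with more than 2^(n-1) elements. Then affineSpan ℝ S = ⊤, i.e., S affinely spans all of ℝ^n. -/
/-- Corollary 3.4: a set of more than `2^(n-1)` vertices of the hypercube
affinely spans all of `ℝ^n`. -/
theorem stmt2 (n : ℕ) (hn : 1 ≤ n) (S : Set (Fin n → ℝ))
    (hS : ∀ x ∈ S, ∀ i, x i = 0 ∨ x i = 1)
    (hcard : 2 ^ (n - 1) < S.ncard) :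
    affineSpan ℝ S = ⊤ := by
  by_contra htop
  -- S is nonempty
  have hSne : S.Nonempty := by
    rw [Set.nonempty_iff_ne_empty]
    rintro rfl
    simp at hcard
  obtain ⟨x0, hx0⟩ := hSne
  -- vectorSpan is proper
  have hvs : vectorSpan ℝ S ≠ ⊤ := by
    intro h
    exact htop ((AffineSubspace.affineSpan_eq_top_iff_vectorSpan_eq_top_of_nonempty ℝ _ _ ⟨x0, hx0⟩).mpr h)
  -- get a nonzero dual functional vanishing on vectorSpan
  obtain ⟨f, hf0, hfmap⟩ := (vectorSpan ℝ S).exists_dual_map_eq_bot_of_lt_top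
    (lt_top_iff_ne_top.mpr hvs) inferInstance
  have hker : ∀ v ∈ vectorSpan ℝ S, f v = 0 := by
    intro v hv
    have : f v ∈ (vectorSpan ℝ S).map f := Submodule.mem_map_of_mem hv
    rw [hfmap] at this
    simpa using this
  -- S lies on the hyperplane f x = f x0
  have hplane : ∀ x ∈ S, f x = f x0 := by
    intro x hx
    have h := hker _ (vsub_mem_vectorSpan ℝ hx hx0)
    rw [vsub_eq_sub, map_sub, sub_eq_zero] at h
    exact h
  -- find i with a_i ≠ 0
  have hex : ∃ i : Fin n, f (fun j => if i = j then (1:ℝ) else 0) ≠ 0 := by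
    by_contra hall
    push_neg at hall
    apply hf0
    apply LinearMap.ext
    intro x
    rw [LinearMap.pi_apply_eq_sum_univ]
    simp [hall]
  obtain ⟨i, hai⟩ := hex
  -- the projection forgetting coordinate i, to Bool-valued functions
  set g : (Fin n → ℝ) → ({j : Fin n // j ≠ i} → Bool) :=
    fun x j => decide (x j.1 = 1) with hg
  have hinj : Set.InjOn g S := by
    intro x hx y hy hxy
    have hcoord : ∀ j : Fin n, j ≠ i → x j = y j := by
      intro j hj
      have := congrFun hxy ⟨j, hj⟩
      simp only [hg, decide_eq_decide] at this
      rcases hS x hx j with h1 | h1 <;> rcases hS y hy j with h2 | h2 <;>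
        simp [h1, h2] at this ⊢
    -- coordinate i agrees by the hyperplane equation
    have hfx := hplane x hx
    have hfy := hplane y hy
    have hsum : f x = f y := by rw [hfx, hfy]
    rw [LinearMap.pi_apply_eq_sum_univ f x, LinearMap.pi_apply_eq_sum_univ f y] at hsum
    have hsplit : ∀ z : Fin n → ℝ,
        ∑ j, z j • f (fun k => if j = k then (1:ℝ) else 0)
          = z i • f (fun k => if i = k then (1:ℝ) else 0)
            + ∑ j ∈ Finset.univ.erase i, z j • f (fun k => if j = k then (1:ℝ) else 0) := by
      intro z
      rw [← Finset.add_sum_erase _ _ (Finset.mem_univ i)]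
    rw [hsplit x, hsplit y] at hsum
    have hrest : ∑ j ∈ Finset.univ.erase i, x j • f (fun k => if j = k then (1:ℝ) else 0)
        = ∑ j ∈ Finset.univ.erase i, y j • f (fun k => if j = k then (1:ℝ) else 0) := by
      apply Finset.sum_congr rfl
      intro j hj
      rw [hcoord j (Finset.ne_of_mem_erase hj)]
    rw [hrest] at hsum
    simp only [smul_eq_mul] at hsum
    have hxi : x i = y i := mul_right_cancel₀ hai (by linarith)
    funext j
    by_cases hj : j = i
    · rw [hj]; exact hxi
    · exact hcoord j hj
  -- counting
  have hle : S.ncard ≤ 2 ^ (n - 1) := by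
    have h1 : (g '' S).ncard = S.ncard := Set.ncard_image_of_injOn hinj
    have h2 : (g '' S).ncard ≤ (Set.univ : Set ({j : Fin n // j ≠ i} → Bool)).ncard :=
      Set.ncard_le_ncard (Set.subset_univ _) Set.finite_univ
    rw [Set.ncard_univ, Nat.card_eq_fintype_card] at h2
    have h3 : Fintype.card ({j : Fin n // j ≠ i} → Bool) = 2 ^ (n - 1) := by
      rw [Fintype.card_fun, Fintype.card_bool]
      congr 1
      rw [Fintype.card_subtype_compl, Fintype.card_subtype_eq, Fintype.card_fin]
    omega
  omega
end

section
/- Let n ≥ 1, let H be an affine subspace of ℝ^n whose direction has dimension n - 1 (an affine hyperplane), and let S be a subset of {0,1}^n ⊆ (Fin n → ℝ) with more than 2^(n-2) elements such that S ⊆ H. Then affineSpan ℝ S = H. -/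
open Module Set

/-- Any set of hypercube vertices has cardinality at most `2 ^ dim (vectorSpan)`. -/
theorem cube_span_card (m : ℕ) (S : Set (Fin m → ℝ))
    (hS : ∀ x ∈ S, ∀ i, x i = 0 ∨ x i = 1) :
    S.ncard ≤ 2 ^ Module.finrank ℝ (vectorSpan ℝ S) := by
  classical
  set W := vectorSpan ℝ S with hW
  set g : Fin m → Module.Dual ℝ W :=
    fun i => W.subtype.dualMap ((Pi.basisFun ℝ (Fin m)).dualBasis i) with hg
  have hgapp : ∀ (i : Fin m) (v : W), g i v = (v : Fin m → ℝ) i := by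
    intro i v
    simp [hg, LinearMap.dualMap_apply, Basis.dualBasis_apply]
  have hsurj : Function.Surjective W.subtype.dualMap :=
    LinearMap.dualMap_surjective_of_injective (Submodule.injective_subtype W)
  have hspan : Submodule.span ℝ (Set.range g) = ⊤ := by
    have h1 : Set.range g =
        W.subtype.dualMap '' Set.range ((Pi.basisFun ℝ (Fin m)).dualBasis) := by
      rw [← Set.range_comp]; rfl
    rw [h1, ← Submodule.map_span, Basis.span_eq, Submodule.map_top,
      LinearMap.range_eq_top.mpr hsurj]
  obtain ⟨t, hts, htsp, hli⟩ := exists_linearIndependent ℝ (Set.range g)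
  have htfin : t.Finite := (Set.finite_range g).subset hts
  have htop : Submodule.span ℝ t = ⊤ := by rw [htsp, hspan]
  haveI := htfin.fintype
  let b : Basis t ℝ (Module.Dual ℝ W) :=
    Basis.mk hli (by rw [Subtype.range_coe, htop])
  have hcardt : Fintype.card t = Module.finrank ℝ W := by
    rw [← Module.finrank_eq_card_basis b, Subspace.dual_finrank_eq]
  -- choose indices
  choose f hf using fun φ : t => hts φ.2
  set I : Set (Fin m) := Set.range f with hI
  haveI : Fintype I := Set.fintypeRange f
  have hIcard : Nat.card I ≤ Module.finrank ℝ W := by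
    calc Nat.card I ≤ Nat.card t := Finite.card_range_le f
    _ = Module.finrank ℝ W := by rw [Nat.card_eq_fintype_card, hcardt]
  -- the restriction map to coordinates in I is injective on S
  have hinj : Set.InjOn (fun x => fun i : I => (x (i : Fin m) = 1 : Prop)) S := by
    intro x hx y hy hxy
    have hv : x - y ∈ W := by
      have := vsub_mem_vectorSpan ℝ hx hy
      simpa using this
    have hcoord : ∀ i ∈ I, x i = y i := by
      intro i hi
      have h1 : (x i = 1) = (y i = 1) := congrFun hxy ⟨i, hi⟩
      rcases hS x hx i with h | h <;> rcases hS y hy i with h' | h' <;>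
        simp_all
    have hvz : ∀ φ : Module.Dual ℝ W, φ ⟨x - y, hv⟩ = 0 := by
      intro φ
      have hφ : φ ∈ Submodule.span ℝ t := by rw [htop]; trivial
      induction hφ using Submodule.span_induction with
      | mem ψ hψ =>
          have hj : g (f ⟨ψ, hψ⟩) = ψ := hf ⟨ψ, hψ⟩
          have hji : (f ⟨ψ, hψ⟩ : Fin m) ∈ I := ⟨⟨ψ, hψ⟩, rfl⟩
          rw [← hj, hgapp]
          have := hcoord _ hji
          simp [this]
      | zero => simp
      | add ψ χ _ _ h1 h2 => simp [h1, h2]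
      | smul c ψ _ h1 => simp [h1]
    have hxy0 : (⟨x - y, hv⟩ : W) = 0 :=
      (Module.forall_dual_apply_eq_zero_iff ℝ (⟨x - y, hv⟩ : W)).mp hvz
    have : x - y = 0 := congrArg Subtype.val hxy0
    exact sub_eq_zero.mp this
  -- counting
  have hScard : Nat.card S ≤ Nat.card (I → Prop) := by
    apply Nat.card_le_card_of_injective
      (fun x : S => fun i : I => ((x : Fin m → ℝ) (i : Fin m) = 1 : Prop))
    intro a b hab
    exact Subtype.ext (hinj a.2 b.2 hab)
  have hIP : Nat.card (I → Prop) = 2 ^ (Nat.card I) := by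
    simp [Nat.card_eq_fintype_card, Fintype.card_fun]
  calc S.ncard = Nat.card S := (Nat.card_coe_set_eq S).symm
    _ ≤ 2 ^ (Nat.card I) := by rw [← hIP]; exact hScard
    _ ≤ 2 ^ Module.finrank ℝ W := Nat.pow_le_pow_right (by norm_num) hIcard

/-- A set of more than `2^(n-2)` vertices of the hypercube contained in an
affine hyperplane `H` has affine span equal to `H`. -/
theorem stmt3 (n : ℕ) (hn : 1 ≤ n) (H : AffineSubspace ℝ (Fin n → ℝ))
    (hH : Module.finrank ℝ H.direction = n - 1)
    (S : Set (Fin n → ℝ)) (hS : ∀ x ∈ S, ∀ i, x i = 0 ∨ x i = 1)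
    (hSH : S ⊆ (H : Set (Fin n → ℝ)))
    (hcard : 2 ^ (n - 2) < S.ncard) :
    affineSpan ℝ S = H := by
  have hkey := cube_span_card n S hS
  have hle : affineSpan ℝ S ≤ H := affineSpan_le.mpr hSH
  by_contra hne
  have hSne : S.Nonempty := Set.nonempty_of_ncard_ne_zero (Nat.ne_zero_of_lt hcard)
  have hlt : affineSpan ℝ S < H := lt_of_le_of_ne hle hne
  have hdir : (affineSpan ℝ S).direction < H.direction :=
    AffineSubspace.direction_lt_of_nonempty hlt
      ((affineSpan_nonempty (k := ℝ)).mpr hSne)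
  have hfr : Module.finrank ℝ (affineSpan ℝ S).direction <
      Module.finrank ℝ H.direction :=
    Submodule.finrank_lt_finrank_of_lt hdir
  rw [direction_affineSpan, hH] at hfr
  have hd2 : Module.finrank ℝ (vectorSpan ℝ S) ≤ n - 2 := by omega
  have : S.ncard ≤ 2 ^ (n - 2) :=
    hkey.trans (Nat.pow_le_pow_right (by norm_num) hd2)
  omega
end

section
/- Let n ≥ 2, let F be an affine subspace of ℝ^n whose direction has dimension n - 2, and let S be a subset of {0,1}^n ⊆ (Fin n → ℝ) with more than 2^(n-3) elements such that S ⊆ F. Then affineSpan ℝ S = F. -/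
open Module

private lemma cube_subspan_le (n : ℕ) (S : Set (Fin n → ℝ)) (i : Fin n) (c : ℝ) :
    (affineSpan ℝ {z ∈ S | z i = c}).direction ≤
      (affineSpan ℝ S).direction ⊓ LinearMap.ker (LinearMap.proj (R := ℝ) (φ := fun _ : Fin n => ℝ) i) := by
  rw [direction_affineSpan, vectorSpan_def, Submodule.span_le]
  rintro v hv
  rw [Set.mem_vsub] at hv
  obtain ⟨a, ⟨haS, hai⟩, b, ⟨hbS, hbi⟩, rfl⟩ := hv
  constructor
  · exact AffineSubspace.vsub_mem_direction (mem_affineSpan ℝ haS) (mem_affineSpan ℝ hbS)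
  · simp [hai, hbi]

private lemma cube_card_bound (n : ℕ) :
    ∀ (m : ℕ) (S : Set (Fin n → ℝ)), S.Finite → S.ncard = m →
      (∀ x ∈ S, ∀ i, x i = 0 ∨ x i = 1) →
      S.ncard ≤ 2 ^ (finrank ℝ (affineSpan ℝ S).direction) := by
  intro m
  induction m using Nat.strong_induction_on with
  | _ m IH =>
    intro S hfin hm hS
    by_cases hconst : ∀ x ∈ S, ∀ y ∈ S, x = y
    · -- S is a subsingleton
      have : S.ncard ≤ 1 := by
        rcases S.eq_empty_or_nonempty with rfl | ⟨x, hx⟩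
        · simp
        · have : S ⊆ {x} := fun y hy => (hconst y hy x hx)
          calc S.ncard ≤ ({x} : Set (Fin n → ℝ)).ncard := Set.ncard_le_ncard this (Set.finite_singleton x)
            _ = 1 := Set.ncard_singleton x
      exact this.trans (Nat.one_le_two_pow)
    · push_neg at hconst
      obtain ⟨x, hx, y, hy, hxy⟩ := hconst
      obtain ⟨i, hi⟩ : ∃ i, x i ≠ y i := by
        by_contra h
        push_neg at h
        exact hxy (funext h)
      set D := (affineSpan ℝ S).direction with hD
      set W := D ⊓ LinearMap.ker (LinearMap.proj (R := ℝ) (φ := fun _ : Fin n => ℝ) i) with hWdef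
      have hxyD : x - y ∈ D := by
        have := AffineSubspace.vsub_mem_direction (mem_affineSpan ℝ hx) (mem_affineSpan ℝ hy)
        simpa using this
      have hWlt : W < D := by
        refine lt_of_le_of_ne inf_le_left ?_
        intro hEq
        have : x - y ∈ W := hEq ▸ hxyD
        have : (x - y) i = 0 := this.2
        simp only [Pi.sub_apply, sub_eq_zero] at this
        exact hi this
      have hWrank : finrank ℝ W < finrank ℝ D := Submodule.finrank_lt_finrank_of_lt hWlt
      have hk1 : 1 ≤ finrank ℝ D := Nat.one_le_iff_ne_zero.mpr (by omega)
      -- split S by coordinate i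
      set S0 := {z ∈ S | z i = 0} with hS0def
      set S1 := {z ∈ S | z i = 1} with hS1def
      have hsub0 : S0 ⊆ S := fun z hz => hz.1
      have hsub1 : S1 ⊆ S := fun z hz => hz.1
      have hunion : S = S0 ∪ S1 := by
        ext z
        constructor
        · intro hz
          rcases hS z hz i with h | h
          · exact Or.inl ⟨hz, h⟩
          · exact Or.inr ⟨hz, h⟩
        · rintro (hz | hz) <;> exact hz.1
      have hdisj : Disjoint S0 S1 := by
        rw [Set.disjoint_left]
        rintro z ⟨_, h0⟩ ⟨_, h1⟩
        rw [h0] at h1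
        norm_num at h1
      -- each part is a strict subset
      have hxy01 : (x ∈ S0 ∧ y ∈ S1) ∨ (x ∈ S1 ∧ y ∈ S0) := by
        rcases hS x hx i with hx0 | hx1 <;> rcases hS y hy i with hy0 | hy1
        · exact absurd (hx0.trans hy0.symm) hi
        · exact Or.inl ⟨⟨hx, hx0⟩, ⟨hy, hy1⟩⟩
        · exact Or.inr ⟨⟨hx, hx1⟩, ⟨hy, hy0⟩⟩
        · exact absurd (hx1.trans hy1.symm) hi
      have hne0 : S0.Nonempty := by rcases hxy01 with ⟨h, _⟩ | ⟨_, h⟩; exacts [⟨x, h⟩, ⟨y, h⟩]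
      have hne1 : S1.Nonempty := by rcases hxy01 with ⟨_, h⟩ | ⟨h, _⟩; exacts [⟨y, h⟩, ⟨x, h⟩]
      have hss0 : S0 ⊂ S := by
        refine ⟨hsub0, fun hle => ?_⟩
        obtain ⟨z, hz⟩ := hne1
        have : z ∈ S0 := hle hz.1
        exact hdisj.ne_of_mem this hz rfl
      have hss1 : S1 ⊂ S := by
        refine ⟨hsub1, fun hle => ?_⟩
        obtain ⟨z, hz⟩ := hne0
        have : z ∈ S1 := hle hz.1
        exact hdisj.ne_of_mem hz this rfl
      have hlt0 : S0.ncard < S.ncard := Set.ncard_lt_ncard hss0 hfin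
      have hlt1 : S1.ncard < S.ncard := Set.ncard_lt_ncard hss1 hfin
      -- bound each part via IH
      have hb0 : S0.ncard ≤ 2 ^ (finrank ℝ D - 1) := by
        have h1 := IH S0.ncard (hm ▸ hlt0) S0 (hfin.subset hsub0) rfl
          (fun z hz => hS z (hsub0 hz))
        refine h1.trans (Nat.pow_le_pow_right (by norm_num) ?_)
        have hle : (affineSpan ℝ S0).direction ≤ W := cube_subspan_le n S i 0
        have := Submodule.finrank_mono hle
        omega
      have hb1 : S1.ncard ≤ 2 ^ (finrank ℝ D - 1) := by
        have h1 := IH S1.ncard (hm ▸ hlt1) S1 (hfin.subset hsub1) rfl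
          (fun z hz => hS z (hsub1 hz))
        refine h1.trans (Nat.pow_le_pow_right (by norm_num) ?_)
        have hle : (affineSpan ℝ S1).direction ≤ W := cube_subspan_le n S i 1
        have := Submodule.finrank_mono hle
        omega
      have hcardeq : S.ncard = S0.ncard + S1.ncard := by
        rw [hunion]
        exact Set.ncard_union_eq hdisj (hfin.subset hsub0) (hfin.subset hsub1)
      have hpow : 2 ^ (finrank ℝ D - 1) + 2 ^ (finrank ℝ D - 1) = 2 ^ (finrank ℝ D) := by
        obtain ⟨d, hd⟩ : ∃ d, finrank ℝ D = d + 1 := ⟨_, (Nat.succ_pred_eq_of_pos hk1).symm⟩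
        rw [hd, Nat.add_sub_cancel, pow_succ]
        omega
      omega

/-- A set of more than `2^(n-3)` vertices of the hypercube contained in an
`(n-2)`-dimensional affine subspace `F` has affine span equal to `F`. -/
theorem stmt4 (n : ℕ) (hn : 2 ≤ n) (F : AffineSubspace ℝ (Fin n → ℝ))
    (hF : Module.finrank ℝ F.direction = n - 2)
    (S : Set (Fin n → ℝ)) (hS : ∀ x ∈ S, ∀ i, x i = 0 ∨ x i = 1)
    (hSF : S ⊆ (F : Set (Fin n → ℝ)))
    (hcard : 2 ^ (n - 3) < S.ncard) :
    affineSpan ℝ S = F := by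
  have hfin : S.Finite := by
    have : S ⊆ Set.pi Set.univ (fun _ : Fin n => ({0, 1} : Set ℝ)) := by
      intro x hx
      rw [Set.mem_univ_pi]
      intro i
      rcases hS x hx i with h | h <;> simp [h]
    exact Set.Finite.subset (Set.Finite.pi (fun _ => by simp)) this
  have hSne : S.Nonempty := by
    exact Set.nonempty_of_ncard_ne_zero (Nat.lt_of_le_of_lt (Nat.zero_le _) hcard).ne'
  have hle : affineSpan ℝ S ≤ F := affineSpan_le.mpr hSF
  have hdirle : (affineSpan ℝ S).direction ≤ F.direction := AffineSubspace.direction_le hle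
  have hbound := cube_card_bound n S.ncard S hfin rfl hS
  have hrankle : finrank ℝ (affineSpan ℝ S).direction ≤ n - 2 :=
    hF ▸ Submodule.finrank_mono hdirle
  have hrankeq : finrank ℝ (affineSpan ℝ S).direction = n - 2 := by
    by_contra h
    have h3 : finrank ℝ (affineSpan ℝ S).direction ≤ n - 3 := by omega
    have : S.ncard ≤ 2 ^ (n - 3) :=
      hbound.trans (Nat.pow_le_pow_right (by norm_num) h3)
    omega
  have hdireq : (affineSpan ℝ S).direction = F.direction :=
    Submodule.eq_of_le_of_finrank_eq hdirle (hrankeq.trans hF.symm)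
  obtain ⟨p, hp⟩ := hSne
  exact AffineSubspace.eq_iff_direction_eq_of_mem (mem_affineSpan ℝ hp) (hSF hp) |>.mpr hdireq
end

section
/- Let n ≥ 2 and let H_1, H_2, ..., H_m (m ≥ 2) be affine hyperplanes in ℝ^n (affine subspaces whose directions have dimension n - 1) with H_1 ≠ H_2. If the intersection ⋂_{i=1}^m H_i contains more than 2^(n-3) points of {0,1}^n, then ⋂_{i=1}^m H_i = H_1 ⊓ H_2 (the intersection of the first two hyperplanes alone). -/
open Set Module

lemma cube_finite (n : ℕ) : {x : Fin n → ℝ | ∀ i, x i = 0 ∨ x i = 1}.Finite := by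
  have : {x : Fin n → ℝ | ∀ i, x i = 0 ∨ x i = 1} ⊆ Set.pi Set.univ (fun _ => ({0, 1} : Set ℝ)) := by
    intro x hx i _
    simpa using hx i
  exact (Set.Finite.pi (fun _ => (Set.finite_singleton _).insert _)).subset this

/-- The hyperplane `{x | x i = c}` as an affine subspace. -/
noncomputable def coordHyp (n : ℕ) (i : Fin n) (c : ℝ) : AffineSubspace ℝ (Fin n → ℝ) :=
  AffineSubspace.mk' (fun j => if j = i then c else 0)
    (LinearMap.ker (LinearMap.proj i : (Fin n → ℝ) →ₗ[ℝ] ℝ))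

lemma mem_coordHyp {n : ℕ} {i : Fin n} {c : ℝ} {x : Fin n → ℝ} :
    x ∈ coordHyp n i c ↔ x i = c := by
  rw [coordHyp, AffineSubspace.mem_mk']
  simp [sub_eq_zero]

lemma direction_coordHyp {n : ℕ} {i : Fin n} {c : ℝ} :
    (coordHyp n i c).direction = LinearMap.ker (LinearMap.proj i : (Fin n → ℝ) →ₗ[ℝ] ℝ) :=
  AffineSubspace.direction_mk' _ _

/-- An affine subspace whose direction has finrank ≤ d contains at most 2^d cube vertices. -/
lemma cube_card_le (n : ℕ) (d : ℕ) : ∀ (A : AffineSubspace ℝ (Fin n → ℝ)) (S : Set (Fin n → ℝ)),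
    Module.finrank ℝ A.direction ≤ d → (∀ x ∈ S, ∀ i, x i = 0 ∨ x i = 1) → S ⊆ A →
    S.ncard ≤ 2 ^ d := by
  induction d with
  | zero =>
    intro A S hd hcube hSA
    have hfin : S.Finite := (cube_finite n).subset (fun x hx => hcube x hx)
    suffices h : S.ncard ≤ 1 by simpa using h
    rw [Set.ncard_le_one_iff hfin]
    intro x y hx hy
    by_contra hxy
    have hv : x -ᵥ y ∈ A.direction := AffineSubspace.vsub_mem_direction (hSA hx) (hSA hy)
    have hbot : A.direction = ⊥ := Submodule.finrank_eq_zero.mp (Nat.le_zero.mp hd)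
    rw [hbot, Submodule.mem_bot] at hv
    exact hxy (sub_eq_zero.mp hv)
  | succ d ih =>
    intro A S hd hcube hSA
    have hfin : S.Finite := (cube_finite n).subset (fun x hx => hcube x hx)
    by_cases hss : ∀ x ∈ S, ∀ y ∈ S, x = y
    · calc S.ncard ≤ 1 := (Set.ncard_le_one hfin).mpr hss
        _ ≤ 2 ^ (d + 1) := Nat.one_le_two_pow
    · push_neg at hss
      obtain ⟨x, hx, y, hy, hxy⟩ := hss
      obtain ⟨i, hi⟩ : ∃ i, x i ≠ y i := by
        by_contra h; push_neg at h; exact hxy (funext h)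
      -- the difference x - y lies in A.direction and has nonzero i-th coordinate
      have hv : x -ᵥ y ∈ A.direction := AffineSubspace.vsub_mem_direction (hSA hx) (hSA hy)
      have hvi : (x - y) i ≠ 0 := sub_ne_zero.mpr hi
      -- slices have strictly smaller dimension
      have hslice : ∀ c : ℝ, Module.finrank ℝ (A ⊓ coordHyp n i c).direction ≤ d := by
        intro c
        have h1 : (A ⊓ coordHyp n i c).direction ≤ A.direction ⊓ (coordHyp n i c).direction :=
          AffineSubspace.direction_inf A (coordHyp n i c)
        have h2 : A.direction ⊓ (coordHyp n i c).direction < A.direction := by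
          refine lt_of_le_of_ne inf_le_left (fun h => ?_)
          have : x -ᵥ y ∈ (coordHyp n i c).direction := (h ▸ hv).2
          rw [direction_coordHyp, LinearMap.mem_ker] at this
          exact hvi this
        have h3 : Module.finrank ℝ (A.direction ⊓ (coordHyp n i c).direction : Submodule ℝ _)
            < Module.finrank ℝ A.direction := Submodule.finrank_lt_finrank_of_lt h2
        have h4 := Submodule.finrank_mono h1
        omega
      -- split S into the two slices
      set S0 := {z ∈ S | z i = 0} with hS0
      set S1 := {z ∈ S | z i = 1} with hS1
      have hsub : ∀ c (Sc : Set (Fin n → ℝ)), Sc = {z ∈ S | z i = c} →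
          Sc.ncard ≤ 2 ^ d := by
        intro c Sc hSc
        refine ih (A ⊓ coordHyp n i c) Sc (hslice c) ?_ ?_
        · intro z hz; exact hcube z ((hSc ▸ hz).1)
        · intro z hz
          rw [hSc] at hz
          exact ⟨hSA hz.1, mem_coordHyp.mpr hz.2⟩
      have hunion : S = S0 ∪ S1 := by
        ext z
        constructor
        · intro hz
          rcases hcube z hz i with h | h
          · exact Or.inl ⟨hz, h⟩
          · exact Or.inr ⟨hz, h⟩
        · rintro (⟨hz, _⟩ | ⟨hz, _⟩) <;> exact hz
      calc S.ncard = (S0 ∪ S1).ncard := by rw [← hunion]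
        _ ≤ S0.ncard + S1.ncard :=
            Set.ncard_union_le S0 S1
        _ ≤ 2 ^ d + 2 ^ d := Nat.add_le_add (hsub 0 S0 rfl) (hsub 1 S1 rfl)
        _ = 2 ^ (d + 1) := by ring

/-- If an intersection of affine hyperplanes `H 0, …, H (m-1)` with `H 0 ≠ H 1`
contains more than `2^(n-3)` hypercube vertices, then it equals `H 0 ⊓ H 1`. -/
theorem stmt5 (n m : ℕ) (hn : 2 ≤ n) (hm : 2 ≤ m)
    (H : Fin m → AffineSubspace ℝ (Fin n → ℝ))
    (hH : ∀ i, Module.finrank ℝ (H i).direction = n - 1)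
    (hne : H ⟨0, lt_of_lt_of_le Nat.zero_lt_two hm⟩ ≠
      H ⟨1, lt_of_lt_of_le Nat.one_lt_two hm⟩)
    (hcard : 2 ^ (n - 3) <
      ({x : Fin n → ℝ | ∀ i, x i = 0 ∨ x i = 1} ∩ ↑(⨅ i, H i)).ncard) :
    (⨅ i, H i) = H ⟨0, lt_of_lt_of_le Nat.zero_lt_two hm⟩ ⊓
      H ⟨1, lt_of_lt_of_le Nat.one_lt_two hm⟩ := by
  set i0 : Fin m := ⟨0, lt_of_lt_of_le Nat.zero_lt_two hm⟩
  set i1 : Fin m := ⟨1, lt_of_lt_of_le Nat.one_lt_two hm⟩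
  set J : AffineSubspace ℝ (Fin n → ℝ) := ⨅ i, H i with hJ
  set S : Set (Fin n → ℝ) := {x : Fin n → ℝ | ∀ i, x i = 0 ∨ x i = 1} ∩ ↑J with hS
  -- S is nonempty; pick a common point p
  have hSne : S.Nonempty := by
    rw [Set.nonempty_iff_ne_empty]
    intro h
    rw [h] at hcard
    simp at hcard
  obtain ⟨p, hpS⟩ := hSne
  have hpJ : p ∈ J := hpS.2
  have hp0 : p ∈ H i0 := (iInf_le H i0) hpJ
  have hp1 : p ∈ H i1 := (iInf_le H i1) hpJ
  have hle : J ≤ H i0 ⊓ H i1 := le_inf (iInf_le H i0) (iInf_le H i1)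
  -- directions of H i0 and H i1 are distinct
  have hdirne : (H i0).direction ≠ (H i1).direction := by
    intro h
    exact hne (AffineSubspace.ext_of_direction_eq h ⟨p, hp0, hp1⟩)
  -- the sup of the two directions is everything
  have hfin0 := hH i0
  have hfin1 := hH i1
  have hsuplt : (H i0).direction < (H i0).direction ⊔ (H i1).direction := by
    refine lt_of_le_of_ne le_sup_left (fun h => ?_)
    have h1 : (H i1).direction ≤ (H i0).direction := le_sup_right.trans h.ge
    exact hdirne ((Submodule.eq_of_le_of_finrank_le h1 (by rw [hfin0, hfin1])).symm)
  have hsupn : Module.finrank ℝ ((H i0).direction ⊔ (H i1).direction : Submodule ℝ _) = n := by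
    have h1 : Module.finrank ℝ (H i0).direction
        < Module.finrank ℝ ((H i0).direction ⊔ (H i1).direction : Submodule ℝ _) :=
      Submodule.finrank_lt_finrank_of_lt hsuplt
    have h2 : Module.finrank ℝ ((H i0).direction ⊔ (H i1).direction : Submodule ℝ _)
        ≤ Module.finrank ℝ (Fin n → ℝ) := Submodule.finrank_le _
    rw [Module.finrank_pi ℝ] at h2
    simp only [Fintype.card_fin] at h2
    omega
  -- finrank of the intersection of directions is n - 2
  have hinfrank : Module.finrank ℝ ((H i0).direction ⊓ (H i1).direction : Submodule ℝ _)
      = n - 2 := by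
    have := Submodule.finrank_sup_add_finrank_inf_eq (H i0).direction (H i1).direction
    rw [hsupn, hfin0, hfin1] at this
    omega
  -- direction of H i0 ⊓ H i1
  have hdirinf : (H i0 ⊓ H i1).direction = (H i0).direction ⊓ (H i1).direction :=
    AffineSubspace.direction_inf_of_mem hp0 hp1
  -- lower bound on finrank of J.direction from the counting lemma
  have hcount : S.ncard ≤ 2 ^ (Module.finrank ℝ J.direction) :=
    cube_card_le n _ J S le_rfl (fun x hx => hx.1) (fun x hx => hx.2)
  have hrankJ : n - 2 ≤ Module.finrank ℝ J.direction := by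
    have h1 : (2 : ℕ) ^ (n - 3) < 2 ^ (Module.finrank ℝ J.direction) := lt_of_lt_of_le hcard hcount
    have h2 : n - 3 < Module.finrank ℝ J.direction :=
      (Nat.pow_lt_pow_iff_right Nat.one_lt_two).mp h1
    omega
  -- J.direction equals the direction of H i0 ⊓ H i1
  have hdirle : J.direction ≤ (H i0 ⊓ H i1).direction := AffineSubspace.direction_le hle
  have hdireq : J.direction = (H i0 ⊓ H i1).direction := by
    refine Submodule.eq_of_le_of_finrank_le hdirle ?_
    rw [hdirinf, hinfrank]
    exact hrankJ
  exact AffineSubspace.ext_of_direction_eq hdireq ⟨p, hpJ, hle hpJ⟩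
end

section
/- Let X be a finite type, let g be a permutation of X (g : Equiv.Perm X), and let i ≥ 2 be an integer. Then, as integers, i * (the number of cycles of length i in the cycle decomposition of g, i.e., Multiset.count i g.cycleType) = ∑_{j ∣ i} μ(i/j) * (the number of fixed points of g^j), where μ is the classical number-theoretic Möbius function and the sum is over the positive divisors j of i. -/
open Equiv Finset Function

private lemma minPer_eq_card_support_cycleOf {X : Type*} [Fintype X] [DecidableEq X]
    (g : Equiv.Perm X) {x : X} (hx : g x ≠ x) :
    Function.minimalPeriod ⇑g x = (g.cycleOf x).support.card := by
  have hc : (g.cycleOf x).IsCycle := g.isCycle_cycleOf hx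
  have hcx : (g.cycleOf x) x ≠ x := by rwa [Equiv.Perm.cycleOf_apply_self]
  have key : ∀ n : ℕ, Function.IsPeriodicPt ⇑g n x ↔ orderOf (g.cycleOf x) ∣ n := by
    intro n
    rw [Function.IsPeriodicPt, Function.IsFixedPt, Equiv.Perm.iterate_eq_pow,
      ← Equiv.Perm.cycleOf_pow_apply_self, orderOf_dvd_iff_pow_eq_one]
    exact (hc.pow_eq_one_iff' hcx).symm
  have h1 : Function.minimalPeriod ⇑g x ∣ orderOf (g.cycleOf x) :=
    Function.IsPeriodicPt.minimalPeriod_dvd ((key _).mpr dvd_rfl)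
  have hpos : 0 < orderOf (g.cycleOf x) := orderOf_pos _
  have h2 : orderOf (g.cycleOf x) ∣ Function.minimalPeriod ⇑g x := by
    rw [← key]
    exact Function.isPeriodicPt_minimalPeriod ⇑g x
  rw [Nat.dvd_antisymm h1 h2, hc.orderOf]

/-- Theorem 2.1 (Chen): `i` times the number of `i`-cycles of a permutation `g`
equals `∑_{j ∣ i} μ(i/j) ψ(g^j)`, where `ψ` counts fixed points. -/
theorem stmt7 (X : Type*) [Fintype X] [DecidableEq X] (g : Equiv.Perm X)
    (i : ℕ) (hi : 2 ≤ i) :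
    (i : ℤ) * (Multiset.count i g.cycleType : ℤ) =
      ∑ j ∈ Nat.divisors i,
        ArithmeticFunction.moebius (i / j) *
          ((Finset.univ.filter fun x => (g ^ j) x = x).card : ℤ) := by
  classical
  set a : ℕ → ℤ := fun d => ((Finset.univ.filter
    fun x => Function.minimalPeriod ⇑g x = d).card : ℤ) with ha
  set ψ : ℕ → ℤ := fun n => ((Finset.univ.filter fun x => (g ^ n) x = x).card : ℤ) with hψ
  -- step 1: ∑_{d ∣ n} a d = ψ n for n > 0
  have step1 : ∀ n > 0, ∑ d ∈ n.divisors, a d = ψ n := by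
    intro n hn
    have hset : (Finset.univ.filter fun x => (g ^ n) x = x)
        = Finset.univ.filter fun x => Function.minimalPeriod ⇑g x ∣ n := by
      ext x
      simp only [Finset.mem_filter, Finset.mem_univ, true_and]
      rw [← Function.isPeriodicPt_iff_minimalPeriod_dvd]
      rw [Function.IsPeriodicPt, Function.IsFixedPt, Equiv.Perm.iterate_eq_pow]
    have := Finset.card_eq_sum_card_fiberwise
      (f := fun x => Function.minimalPeriod ⇑g x)
      (s := Finset.univ.filter fun x => Function.minimalPeriod ⇑g x ∣ n)
      (t := n.divisors) ?_
    · show _ = ((Finset.univ.filter fun x => (g ^ n) x = x).card : ℤ)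
      rw [hset]
      rw [this]
      push_cast
      refine Finset.sum_congr rfl fun d hd => ?_
      have heq : Finset.filter (fun x => Function.minimalPeriod ⇑g x = d)
          (Finset.univ.filter fun x => Function.minimalPeriod ⇑g x ∣ n)
          = Finset.univ.filter fun x => Function.minimalPeriod ⇑g x = d := by
        ext x
        simp only [Finset.mem_filter, Finset.mem_univ, true_and, and_iff_right_iff_imp]
        intro h
        exact h ▸ (Nat.mem_divisors.mp hd).1
      rw [heq]
    · intro x hx
      simp only [Finset.mem_coe, Finset.mem_filter, Finset.mem_univ, true_and] at hx
      exact Nat.mem_divisors.mpr ⟨hx, hn.ne'⟩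
  -- Möbius inversion
  have inv := (ArithmeticFunction.sum_eq_iff_sum_mul_moebius_eq
    (R := ℤ) (f := a) (g := ψ)).mp step1 i (by omega)
  simp only [Int.cast_id] at inv
  rw [← Nat.sum_divisorsAntidiagonal' (f := fun x y => (ArithmeticFunction.moebius x : ℤ) * ψ y)]
  rw [inv]
  -- step 3: a i = i * count
  have hcount : Multiset.count i g.cycleType =
      (g.cycleFactorsFinset.filter fun c => c.support.card = i).card := by
    rw [Equiv.Perm.cycleType_def, Multiset.count_map]
    rw [show (g.cycleFactorsFinset.filter fun c => c.support.card = i).card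
        = Multiset.card (Multiset.filter (fun c => c.support.card = i)
          g.cycleFactorsFinset.val) from rfl]
    congr 1
    exact Multiset.filter_congr fun c _ => by simp [Function.comp, eq_comm]
  have hfib : (Finset.univ.filter fun x => Function.minimalPeriod ⇑g x = i)
      = (g.cycleFactorsFinset.filter fun c => c.support.card = i).biUnion
          Equiv.Perm.support := by
    ext x
    simp only [Finset.mem_filter, Finset.mem_univ, true_and, Finset.mem_biUnion]
    constructor
    · intro h
      have hx : g x ≠ x := by
        intro hfix
        rw [Function.minimalPeriod_eq_one_iff_isFixedPt.mpr hfix] at h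
        omega
      refine ⟨g.cycleOf x,
        ⟨Equiv.Perm.cycleOf_mem_cycleFactorsFinset_iff.mpr (Equiv.Perm.mem_support.mpr hx),
          by rw [← minPer_eq_card_support_cycleOf g hx, h]⟩, ?_⟩
      rw [Equiv.Perm.mem_support_cycleOf_iff]
      exact ⟨Equiv.Perm.SameCycle.refl _ _, Equiv.Perm.mem_support.mpr hx⟩
    · rintro ⟨c, hc, hxc⟩
      have hcx : c = g.cycleOf x := Equiv.Perm.cycle_is_cycleOf hxc hc.1
      have hx : g x ≠ x := by
        have := Equiv.Perm.support_cycleOf_le g x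
        rw [← hcx] at this
        have := this hxc
        rwa [Equiv.Perm.mem_support] at this
      rw [minPer_eq_card_support_cycleOf g hx, ← hcx, hc.2]
  have hdisj : ∀ c ∈ g.cycleFactorsFinset.filter fun c => c.support.card = i,
      ∀ c' ∈ g.cycleFactorsFinset.filter fun c => c.support.card = i,
      c ≠ c' → Disjoint c.support c'.support := by
    intro c hc c' hc' hne
    have := g.cycleFactorsFinset_pairwise_disjoint
      (Finset.mem_filter.mp hc).1 (Finset.mem_filter.mp hc').1 hne
    exact Equiv.Perm.Disjoint.disjoint_support this
  have hcard : (Finset.univ.filter fun x => Function.minimalPeriod ⇑g x = i).card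
      = i * (g.cycleFactorsFinset.filter fun c => c.support.card = i).card := by
    rw [hfib, Finset.card_biUnion hdisj]
    rw [Finset.sum_congr rfl fun c hc => (Finset.mem_filter.mp hc).2]
    rw [Finset.sum_const, smul_eq_mul, mul_comm]
  rw [ha] at *
  simp only at hcard ⊢
  rw [hcard, hcount]
  push_cast
  ring
end

section
/- Let α and β be finite types, let σ be a permutation of α and τ a permutation of β, and let (x, y) ∈ α × β. Then the cardinality of the orbit of (x, y) under the permutation of α × β given by (x, y) ↦ (σ x, τ y) (i.e., Equiv.prodCongr σ τ) equals Nat.lcm of the cardinality of the orbit of x under σ and the cardinality of the orbit of y under τ. -/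
open MulAction Function

private lemma orbit_ncard_eq {γ : Type*} [Fintype γ] (π : Equiv.Perm γ) (z : γ) :
    (Set.range fun k : ℤ => (π ^ k) z).ncard = Function.minimalPeriod π z := by
  have hset : (Set.range fun k : ℤ => (π ^ k) z)
      = MulAction.orbit (Subgroup.zpowers π) z := by
    ext w
    constructor
    · rintro ⟨k, rfl⟩
      exact ⟨⟨π ^ k, Subgroup.zpow_mem _ (Subgroup.mem_zpowers π) k⟩, rfl⟩
    · rintro ⟨⟨g, k, rfl⟩, rfl⟩
      exact ⟨k, rfl⟩
  classical
  rw [hset, Set.ncard_eq_toFinset_card', Set.toFinset_card]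
  have h := (MulAction.minimalPeriod_eq_card (a := π) (b := z)).symm
  exact h

/-- Lemma 6.1 (core): the orbit of `(x, y)` under `σ × τ` has size the least
common multiple of the orbit sizes of `x` under `σ` and of `y` under `τ`. -/
theorem stmt8 (α β : Type*) [Fintype α] [Fintype β]
    (σ : Equiv.Perm α) (τ : Equiv.Perm β) (x : α) (y : β) :
    (Set.range fun k : ℤ => ((σ.prodCongr τ) ^ k) (x, y)).ncard =
      Nat.lcm (Set.range fun k : ℤ => (σ ^ k) x).ncard
        (Set.range fun k : ℤ => (τ ^ k) y).ncard := by
  rw [orbit_ncard_eq, orbit_ncard_eq, orbit_ncard_eq]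
  have hcoe : ⇑(σ.prodCongr τ) = Prod.map ⇑σ ⇑τ := by
    ext p <;> rfl
  rw [show Function.minimalPeriod ⇑(σ.prodCongr τ) (x, y)
      = Function.minimalPeriod (Prod.map ⇑σ ⇑τ) (x, y) by rw [hcoe]]
  exact Function.minimalPeriod_prodMap _ _ _
end

section
/- Let n ≥ 1 and t with 1 ≤ t ≤ n. Let a : Fin n → ℝ satisfy a i > 0 for all i with (i : ℕ) < t and a i = 0 for all i with (i : ℕ) ≥ t, and let b : ℝ. Let H = {x : Fin n → ℝ | ∑ i, a i * x i = b}, and assume H is a spanned hyperplane of Q_n, i.e., the affine span over ℝ of {0,1}^n ∩ H has direction of dimension n - 1. For a permutation π of Fin n and a sign vector ε : Fin n → Bool, let f_{π,ε} : (Fin n → ℝ) → (Fin n → ℝ) be defined by (f_{π,ε} x) i = x (π i) if ε i = false and (f_{π,ε} x) i = 1 - x (π i) if ε i = true. Then f_{π,ε} maps H onto H (i.e., f_{π,ε} '' H = H) if and only if: (∀ i with (i : ℕ) < t, a (π i) = a i) and, moreover, either ε i = false for all i with (i : ℕ) < t, or (ε i = true for all i with (i : ℕ) < t and ∑ i, a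 i = 2 * b). -/
open Finset

lemma hyper {n : ℕ} (a c : Fin n → ℝ) (b b' : ℝ) (i0 : Fin n) (ha : a i0 ≠ 0)
    (h : {y : Fin n → ℝ | ∑ i, c i * y i = b'} = {y | ∑ i, a i * y i = b}) :
    ∃ l : ℝ, l ≠ 0 ∧ (∀ i, c i = l * a i) ∧ b' = l * b := by
  classical
  set y0 : Fin n → ℝ := fun j => if j = i0 then b / a i0 else 0 with hy0def
  have hy0 : ∑ i, a i * y0 i = b := by
    simp only [hy0def, mul_ite, mul_zero]
    rw [Finset.sum_ite_eq' Finset.univ i0]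
    simp only [Finset.mem_univ, if_true]
    field_simp
  have hy0c : ∑ i, c i * y0 i = b' := by
    have h1 : y0 ∈ {y : Fin n → ℝ | ∑ i, a i * y i = b} := hy0
    rw [← h] at h1; exact h1
  have key0 : ∀ v : Fin n → ℝ, ∑ i, a i * v i = 0 → ∑ i, c i * v i = 0 := by
    intro v hv
    have h1 : (fun j => y0 j + v j) ∈ {y : Fin n → ℝ | ∑ i, a i * y i = b} := by
      show ∑ i, a i * (y0 i + v i) = b
      simp only [mul_add, Finset.sum_add_distrib, hy0, hv, add_zero]
    rw [← h] at h1
    have h2 : ∑ i, c i * y0 i + ∑ i, c i * v i = b' := by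
      have := h1
      simp only [Set.mem_setOf_eq, mul_add, Finset.sum_add_distrib] at this
      exact this
    linarith
  set A : ℝ := ∑ i, a i * a i with hAdef
  have hA : 0 < A := by
    apply Finset.sum_pos' (fun i _ => mul_self_nonneg (a i))
    exact ⟨i0, Finset.mem_univ _, mul_self_pos.mpr ha⟩
  set l : ℝ := (∑ i, c i * a i) / A with hldef
  have hva : ∑ i, a i * (c i - l * a i) = 0 := by
    simp only [mul_sub, Finset.sum_sub_distrib]
    have h1 : ∑ i, a i * (l * a i) = l * A := by
      rw [hAdef, Finset.mul_sum]; exact Finset.sum_congr rfl fun i _ => by ring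
    have h2 : ∑ i, a i * c i = ∑ i, c i * a i :=
      Finset.sum_congr rfl fun i _ => by ring
    rw [h1, h2, hldef, div_mul_cancel₀ _ hA.ne']
    ring
  have hvc : ∑ i, c i * (c i - l * a i) = 0 := key0 _ hva
  have hv2 : ∑ i, (c i - l * a i) * (c i - l * a i) = 0 := by
    have : ∑ i, (c i - l * a i) * (c i - l * a i)
        = ∑ i, c i * (c i - l * a i) - l * ∑ i, a i * (c i - l * a i) := by
      rw [Finset.mul_sum, ← Finset.sum_sub_distrib]
      exact Finset.sum_congr rfl fun i _ => by ring
    rw [this, hvc, hva]; ring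
  have hcl : ∀ i, c i = l * a i := by
    intro i
    have h0 := (Finset.sum_eq_zero_iff_of_nonneg
      (fun i _ => mul_self_nonneg (c i - l * a i))).mp hv2 i (Finset.mem_univ i)
    have := mul_self_eq_zero.mp h0
    linarith
  have hbl : b' = l * b := by
    rw [← hy0c, ← hy0, Finset.mul_sum]
    exact Finset.sum_congr rfl fun i _ => by rw [hcl i]; ring
  refine ⟨l, ?_, hcl, hbl⟩
  intro hl0
  have hc0 : ∀ i, c i = 0 := fun i => by rw [hcl i, hl0, zero_mul]
  have hb'0 : b' = 0 := by rw [hbl, hl0, zero_mul]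
  have h1 : (fun j => y0 j + if j = i0 then 1 else 0) ∈
      {y : Fin n → ℝ | ∑ i, c i * y i = b'} := by
    show ∑ i, c i * _ = b'
    simp [hc0, hb'0]
  rw [h] at h1
  have h2 : ∑ i, a i * (y0 i + if i = i0 then 1 else 0) = b + a i0 := by
    simp only [mul_add, Finset.sum_add_distrib, hy0, mul_ite, mul_one, mul_zero]
    rw [Finset.sum_ite_eq' Finset.univ i0]
    simp
  have h3 : ∑ i, a i * (y0 i + if i = i0 then 1 else 0) = b := h1
  rw [h2] at h3
  exact ha (by linarith)

/-- Theorem 5.1: a signed permutation `f_{π,ε}` fixes the spanned hyperplane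
`a₁x₁ + ⋯ + aₜxₜ = b` iff it permutes coordinates with equal coefficients and
carries either all plus signs, or all minus signs when `∑ a_i = 2b`. -/
theorem stmt10 (n t : ℕ) (hn : 1 ≤ n) (ht : 1 ≤ t) (htn : t ≤ n)
    (a : Fin n → ℝ) (hpos : ∀ i : Fin n, (i : ℕ) < t → 0 < a i)
    (hzero : ∀ i : Fin n, t ≤ (i : ℕ) → a i = 0) (b : ℝ)
    (hspan : Module.finrank ℝ
      (affineSpan ℝ ({x : Fin n → ℝ | ∀ i, x i = 0 ∨ x i = 1} ∩
        {x | ∑ i, a i * x i = b})).direction = n - 1)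
    (π : Equiv.Perm (Fin n)) (ε : Fin n → Bool) :
    (fun x : Fin n → ℝ => fun i => if ε i then 1 - x (π i) else x (π i)) ''
        {x | ∑ i, a i * x i = b} = {x | ∑ i, a i * x i = b} ↔
      (∀ i : Fin n, (i : ℕ) < t → a (π i) = a i) ∧
        ((∀ i : Fin n, (i : ℕ) < t → ε i = false) ∨
          ((∀ i : Fin n, (i : ℕ) < t → ε i = true) ∧ ∑ i, a i = 2 * b)) := by
  classical
  set c : Fin n → ℝ := fun i => if ε i then -a (π i) else a (π i) with hcdef
  set B : ℝ := ∑ i, (if ε i then a (π i) else (0:ℝ)) with hBdef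
  set S : Finset (Fin n) := Finset.univ.filter (fun i : Fin n => (i : ℕ) < t) with hSdef
  have key : ∀ y : Fin n → ℝ,
      ∑ i, a (π i) * (if ε i then 1 - y i else y i) = ∑ i, c i * y i + B := by
    intro y
    rw [hBdef, ← Finset.sum_add_distrib]
    refine Finset.sum_congr rfl fun i _ => ?_
    rcases Bool.eq_false_or_eq_true (ε i) with h | h <;> simp [hcdef, h] <;> ring
  have himg : (fun x : Fin n → ℝ => fun i => if ε i then 1 - x (π i) else x (π i)) ''
      {x | ∑ i, a i * x i = b} = {y | ∑ i, c i * y i = b - B} := by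
    ext y
    constructor
    · rintro ⟨x, hx, rfl⟩
      have hx' : ∑ i, a i * x i = b := hx
      have h2 := key (fun i => if ε i then 1 - x (π i) else x (π i))
      have h1 : ∑ i, a (π i) *
          (if ε i then 1 - (if ε i then 1 - x (π i) else x (π i))
            else (if ε i then 1 - x (π i) else x (π i))) = b := by
        have he : ∑ i, a (π i) *
            (if ε i then 1 - (if ε i then 1 - x (π i) else x (π i))
              else (if ε i then 1 - x (π i) else x (π i))) = ∑ i, a (π i) * x (π i) := by
          refine Finset.sum_congr rfl fun i _ => ?_
          rcases Bool.eq_false_or_eq_true (ε i) with h | h <;> simp [h]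
        rw [he, Equiv.sum_comp π (fun j => a j * x j)]
        exact hx'
      simp only at h2 h1 ⊢
      show ∑ i, c i * (if ε i then 1 - x (π i) else x (π i)) = b - B
      linarith [h2, h1]
    · intro hy
      have hy' : ∑ i, c i * y i = b - B := hy
      refine ⟨fun j => if ε (π.symm j) then 1 - y (π.symm j) else y (π.symm j), ?_, ?_⟩
      · show ∑ j, a j * (if ε (π.symm j) then 1 - y (π.symm j) else y (π.symm j)) = b
        rw [← Equiv.sum_comp π
          (fun j => a j * (if ε (π.symm j) then 1 - y (π.symm j) else y (π.symm j)))]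
        simp only [Equiv.symm_apply_apply]
        rw [key y]
        linarith
      · funext i
        simp only [Equiv.symm_apply_apply]
        rcases Bool.eq_false_or_eq_true (ε i) with h | h <;> simp [h]
  rw [himg]
  have hSmem : ∀ i : Fin n, i ∈ S ↔ (i : ℕ) < t := by
    intro i; simp [hSdef]
  have hi0 : (⟨0, hn⟩ : Fin n) ∈ S := (hSmem _).mpr (by show 0 < t; omega)
  have hT : 0 < ∑ i ∈ S, a i :=
    Finset.sum_pos (fun i hi => hpos i ((hSmem i).mp hi)) ⟨_, hi0⟩
  have hsum2 : ∑ i, a i = ∑ i ∈ S, a i := by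
    rw [← Finset.sum_filter_add_sum_filter_not Finset.univ (fun i : Fin n => (i : ℕ) < t) a]
    have h0 : ∑ i ∈ Finset.univ.filter (fun i : Fin n => ¬ (i : ℕ) < t), a i = 0 :=
      Finset.sum_eq_zero fun i hi =>
        hzero i (Nat.le_of_not_lt (Finset.mem_filter.mp hi).2)
    rw [h0]; simp [hSdef]
  constructor
  · intro hH
    obtain ⟨l, hl0, hcl, hbl⟩ := hyper a c b (b - B) ⟨0, hn⟩
      (hpos ⟨0, hn⟩ (by show 0 < t; omega)).ne' hH
    have hπlt : ∀ i : Fin n, (i : ℕ) < t → (π i : ℕ) < t := by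
      intro i hi
      by_contra h
      have haπ : a (π i) = 0 := hzero _ (Nat.le_of_not_lt h)
      have hc0 : c i = 0 := by
        rcases Bool.eq_false_or_eq_true (ε i) with hb | hb <;> simp [hcdef, hb, haπ]
      rw [hcl i] at hc0
      rcases mul_eq_zero.mp hc0 with h' | h'
      · exact hl0 h'
      · exact (hpos i hi).ne' h'
    have hπge0 : ∀ i : Fin n, t ≤ (i : ℕ) → a (π i) = 0 := by
      intro i hi
      have hc0 : c i = 0 := by rw [hcl i, hzero i hi, mul_zero]
      rcases Bool.eq_false_or_eq_true (ε i) with hb | hb <;>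
        simpa [hcdef, hb, neg_eq_zero] using hc0
    have hsum1 : ∑ i ∈ S, a (π i) = ∑ i, a i := by
      have h1 := Finset.sum_filter_add_sum_filter_not Finset.univ
        (fun i : Fin n => (i : ℕ) < t) (fun i => a (π i))
      have h0 : ∑ i ∈ Finset.univ.filter (fun i : Fin n => ¬ (i : ℕ) < t), a (π i) = 0 :=
        Finset.sum_eq_zero fun i hi =>
          hπge0 i (Nat.le_of_not_lt (Finset.mem_filter.mp hi).2)
      have h2 : ∑ i, a (π i) = ∑ i, a i := Equiv.sum_comp π a
      rw [h0, add_zero, h2] at h1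
      rw [hSdef]
      exact h1
    rcases hl0.lt_or_gt with hlneg | hlpos
    · -- l < 0 : all minus signs
      have hεt : ∀ i : Fin n, (i : ℕ) < t → ε i = true := by
        intro i hi
        by_contra hb
        have hb' : ε i = false := by simpa using hb
        have hc : c i = a (π i) := by simp [hcdef, hb']
        rw [hcl i] at hc
        have p1 := hpos i hi
        have p2 := hpos (π i) (hπlt i hi)
        nlinarith
      have hca : ∀ i : Fin n, (i : ℕ) < t → -a (π i) = l * a i := by
        intro i hi
        have hc : c i = -a (π i) := by simp [hcdef, hεt i hi]
        rw [hcl i] at hc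
        linarith
      have hsl : -∑ i ∈ S, a (π i) = l * ∑ i ∈ S, a i := by
        rw [Finset.mul_sum, ← Finset.sum_neg_distrib]
        exact Finset.sum_congr rfl fun i hi => hca i ((hSmem i).mp hi)
      have hl1 : l = -1 := by
        have h1 : ∑ i ∈ S, a (π i) = ∑ i ∈ S, a i := by rw [hsum1, hsum2]
        rw [h1] at hsl
        have h2 : (l + 1) * (∑ i ∈ S, a i) = 0 := by linarith
        rcases mul_eq_zero.mp h2 with h | h
        · linarith
        · linarith
      have hBa : B = ∑ i, a i := by
        rw [hBdef]
        have h1 := Finset.sum_filter_add_sum_filter_not Finset.univ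
          (fun i : Fin n => (i : ℕ) < t) (fun i => if ε i then a (π i) else (0:ℝ))
        have ha1 : ∑ i ∈ Finset.univ.filter (fun i : Fin n => (i : ℕ) < t),
            (if ε i then a (π i) else (0:ℝ)) = ∑ i ∈ S, a (π i) := by
          rw [hSdef]
          exact Finset.sum_congr rfl fun i hi => by
            simp [hεt i (Finset.mem_filter.mp hi).2]
        have ha2 : ∑ i ∈ Finset.univ.filter (fun i : Fin n => ¬ (i : ℕ) < t),
            (if ε i then a (π i) else (0:ℝ)) = 0 := by
          refine Finset.sum_eq_zero fun i hi => ?_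
          have := hπge0 i (Nat.le_of_not_lt (Finset.mem_filter.mp hi).2)
          rcases Bool.eq_false_or_eq_true (ε i) with hb | hb <;> simp [hb, this]
        rw [ha1, ha2, add_zero, hsum1] at h1
        exact h1.symm
      refine ⟨fun i hi => by have := hca i hi; rw [hl1] at this; linarith, Or.inr ⟨hεt, ?_⟩⟩
      have hb2 : b - B = -b := by rw [hbl, hl1]; ring
      rw [hBa] at hb2
      linarith
    · -- 0 < l : all plus signs
      have hεf : ∀ i : Fin n, (i : ℕ) < t → ε i = false := by
        intro i hi
        by_contra hb
        have hb' : ε i = true := by simpa using hb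
        have hc : c i = -a (π i) := by simp [hcdef, hb']
        rw [hcl i] at hc
        have p1 := hpos i hi
        have p2 := hpos (π i) (hπlt i hi)
        nlinarith
      have hca : ∀ i : Fin n, (i : ℕ) < t → a (π i) = l * a i := by
        intro i hi
        have hc : c i = a (π i) := by simp [hcdef, hεf i hi]
        rw [hcl i] at hc
        linarith
      have hsl : ∑ i ∈ S, a (π i) = l * ∑ i ∈ S, a i := by
        rw [Finset.mul_sum]
        exact Finset.sum_congr rfl fun i hi => hca i ((hSmem i).mp hi)
      have hl1 : l = 1 := by
        have h1 : ∑ i ∈ S, a (π i) = ∑ i ∈ S, a i := by rw [hsum1, hsum2]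
        rw [h1] at hsl
        have h2 : (l - 1) * (∑ i ∈ S, a i) = 0 := by linarith
        rcases mul_eq_zero.mp h2 with h | h
        · linarith
        · linarith
      exact ⟨fun i hi => by rw [hca i hi, hl1, one_mul], Or.inl hεf⟩
  · rintro ⟨h1, h2⟩
    have hπlt' : ∀ i : Fin n, (i : ℕ) < t → (π i : ℕ) < t := by
      intro i hi
      by_contra h
      have h0 := hzero (π i) (Nat.le_of_not_lt h)
      rw [h1 i hi] at h0
      exact (hpos i hi).ne' h0
    have himage : S.image π = S := by
      apply Finset.eq_of_subset_of_card_le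
      · intro j hj
        obtain ⟨i, hi, rfl⟩ := Finset.mem_image.mp hj
        exact (hSmem _).mpr (hπlt' i ((hSmem i).mp hi))
      · rw [Finset.card_image_of_injective _ π.injective]
    have hπge : ∀ i : Fin n, t ≤ (i : ℕ) → a (π i) = 0 := by
      intro i hi
      apply hzero
      by_contra h
      have hmem : π i ∈ S := (hSmem _).mpr (Nat.lt_of_not_le h)
      rw [← himage] at hmem
      obtain ⟨j, hj, hji⟩ := Finset.mem_image.mp hmem
      have hj' := (hSmem j).mp hj
      have hje : j = i := π.injective hji
      rw [hje] at hj'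
      exact absurd hj' (Nat.not_lt.mpr hi)
    have haπ : ∀ i, a (π i) = a i := by
      intro i
      rcases Nat.lt_or_ge (i : ℕ) t with hi | hi
      · exact h1 i hi
      · rw [hπge i hi, hzero i hi]
    rcases h2 with hεf | ⟨hεt, hsum⟩
    · have hceq : c = a := by
        funext i
        rcases Nat.lt_or_ge (i : ℕ) t with hi | hi
        · simp [hcdef, hεf i hi, haπ i]
        · rcases Bool.eq_false_or_eq_true (ε i) with hb | hb <;>
            simp [hcdef, hb, hπge i hi, hzero i hi]
      have hB0 : B = 0 := by
        rw [hBdef]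
        refine Finset.sum_eq_zero fun i _ => ?_
        rcases Nat.lt_or_ge (i : ℕ) t with hi | hi
        · simp [hεf i hi]
        · rcases Bool.eq_false_or_eq_true (ε i) with hb | hb <;> simp [hb, hπge i hi]
      rw [hceq, hB0, sub_zero]
    · have hceq : ∀ i, c i = -a i := by
        intro i
        rcases Nat.lt_or_ge (i : ℕ) t with hi | hi
        · simp [hcdef, hεt i hi, haπ i]
        · rcases Bool.eq_false_or_eq_true (ε i) with hb | hb <;>
            simp [hcdef, hb, hπge i hi, hzero i hi]
      have hBa : B = ∑ i, a i := by
        rw [hBdef]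
        refine Finset.sum_congr rfl fun i _ => ?_
        rcases Nat.lt_or_ge (i : ℕ) t with hi | hi
        · simp [hεt i hi, haπ i]
        · rcases Bool.eq_false_or_eq_true (ε i) with hb | hb <;> simp [hb, hπge i hi, hzero i hi]
      ext y
      simp only [Set.mem_setOf_eq]
      have hcy : ∑ i, c i * y i = -∑ i, a i * y i := by
        rw [← Finset.sum_neg_distrib]
        exact Finset.sum_congr rfl fun i _ => by rw [hceq i]; ring
      rw [hcy, hBa, hsum]
      constructor <;> intro h <;> linarith
end

section
/- Let n ≥ 1 and t with 1 ≤ t ≤ n. Let a : Fin n → ℝ satisfy a i > 0 for (i : ℕ) < t and a i = 0 for (i : ℕ) ≥ t, and let b : ℝ. Let H = {x : Fin n → ℝ | ∑ i, a i * x i = b}, and assume the affine span over ℝ of {0,1}^n ∩ H has direction of dimension n - 1. Let δ = 1 if ∑ i, a i = 2 * b and δ = 0 otherwise. Then the number of pairs (π, ε), with π a permutation of Fin n and ε : Fin n → Bool, such that the map f_{π,ε} (defined by (f_{π,ε} x) i = x(π i) if ε i = false, and 1 - x(π i) if ε i = true) maps H onto H, equals (n-t)! * 2^(n - t + δ) *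 ∏_{v ∈ image of a on {i : (i:ℕ) < t}} (m_v)!, where m_v is the number of indices i with (i : ℕ) < t and a i = v. -/
open Classical

section Aux
open Finset Equiv

lemma sum_mul_single {n : ℕ} (u : Fin n → ℝ) (j : Fin n) (v : ℝ) :
    ∑ i, u i * (if i = j then v else 0) = u j * v := by
  rw [Finset.sum_eq_single j] <;> simp +contextual

lemma hyperplane_sub {n : ℕ} (a c : Fin n → ℝ) (b d : ℝ) (i0 : Fin n) (h0 : a i0 ≠ 0)
    (h : ∀ x : Fin n → ℝ, ∑ i, a i * x i = b → ∑ i, c i * x i = d) :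
    ∃ l : ℝ, (∀ j, c j = l * a j) ∧ d = l * b := by
  refine ⟨c i0 / a i0, fun j => ?_, ?_⟩
  · rcases eq_or_ne j i0 with rfl | hj
    · field_simp
    · -- test point: 1 at j, (b - a j)/a i0 at i0, 0 elsewhere
      have hx := h (fun k => (if k = j then 1 else 0) + (if k = i0 then (b - a j) / a i0 else 0)) ?_
      · simp only [mul_add, Finset.sum_add_distrib, sum_mul_single] at hx
        have hd := h (fun k => if k = i0 then b / a i0 else 0) ?_
        · rw [sum_mul_single] at hd
          field_simp at hx hd ⊢
          nlinarith [hx, hd]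
        · rw [sum_mul_single]; field_simp
      · simp only [mul_add, Finset.sum_add_distrib, sum_mul_single]
        field_simp
        ring
  · have hd := h (fun k => if k = i0 then b / a i0 else 0) ?_
    · rw [sum_mul_single] at hd; rw [← hd]; ring
    · rw [sum_mul_single]; field_simp

lemma equiv_image_eq {α : Type*} (e : Equiv.Perm α) (s : Set α) :
    e '' s = s ↔ ∀ x, e x ∈ s ↔ x ∈ s := by
  constructor
  · intro hs x
    conv_lhs => rw [← hs]
    exact e.injective.mem_set_image
  · intro h
    ext y
    constructor
    · rintro ⟨x, hx, rfl⟩; exact (h x).2 hx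
    · intro hy
      exact ⟨e.symm y, (h (e.symm y)).1 (by simpa using hy), e.apply_symm_apply y⟩

lemma key_char {n t : ℕ} (ht : 1 ≤ t) (htn : t ≤ n)
    (a : Fin n → ℝ) (hpos : ∀ i : Fin n, (i : ℕ) < t → 0 < a i)
    (hzero : ∀ i : Fin n, t ≤ (i : ℕ) → a i = 0) (b : ℝ)
    (p : Equiv.Perm (Fin n) × (Fin n → Bool)) :
    (fun x : Fin n → ℝ => fun i => if p.2 i then 1 - x (p.1 i) else x (p.1 i)) ''
        {x | ∑ i, a i * x i = b} = {x | ∑ i, a i * x i = b} ↔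
      ((∀ i, a (p.1 i) = a i) ∧
        ((∀ i : Fin n, (i : ℕ) < t → p.2 i = false) ∨
          (∑ i, a i = 2 * b ∧ ∀ i : Fin n, (i : ℕ) < t → p.2 i = true))) := by
  obtain ⟨π, ε⟩ := p
  simp only []
  have hanneg : ∀ i, 0 ≤ a i := by
    intro i
    rcases lt_or_ge (i : ℕ) t with h | h
    · exact (hpos i h).le
    · rw [hzero i h]
  -- the map as an Equiv
  set F : Equiv.Perm (Fin n → ℝ) :=
    { toFun := fun x i => if ε i then 1 - x (π i) else x (π i)
      invFun := fun y i => if ε (π.symm i) then 1 - y (π.symm i) else y (π.symm i)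
      left_inv := by
        intro x; funext i
        by_cases h : ε (π.symm i) <;> simp [h]
      right_inv := by
        intro y; funext i
        by_cases h : ε i <;> simp [h] } with hF
  have hFfun : (fun x : Fin n → ℝ => fun i => if ε i then 1 - x (π i) else x (π i)) = ⇑F := rfl
  rw [hFfun, equiv_image_eq]
  -- the transformed linear form
  set c : Fin n → ℝ := fun j => if ε (π.symm j) then -(a (π.symm j)) else a (π.symm j) with hc
  set d : ℝ := b - ∑ i, (if ε i then a i else 0) with hd
  have hsum : ∀ x : Fin n → ℝ, ∑ i, a i * F x i
      = (∑ i, (if ε i then a i else 0)) + ∑ j, c j * x j := by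
    intro x
    have h1 : ∀ i, a i * F x i
        = (if ε i then a i else 0) + (if ε i then -(a i) else a i) * x (π i) := by
      intro i
      by_cases h : ε i <;> simp [hF, h] <;> ring
    rw [Finset.sum_congr rfl fun i _ => h1 i, Finset.sum_add_distrib]
    congr 1
    rw [← Equiv.sum_comp π (fun j => c j * x j)]
    refine Finset.sum_congr rfl fun i _ => ?_
    simp [hc]
  have hmem : ∀ x : Fin n → ℝ, (F x ∈ {x : Fin n → ℝ | ∑ i, a i * x i = b})
      ↔ ∑ j, c j * x j = d := by
    intro x
    simp only [Set.mem_setOf_eq, hsum x, hd]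
    constructor <;> intro h <;> linarith
  constructor
  · intro h
    -- forward direction
    have i0 : Fin n := ⟨0, lt_of_lt_of_le ht htn⟩
    have hi0t : ((⟨0, lt_of_lt_of_le ht htn⟩ : Fin n) : ℕ) < t := ht
    have ha0 : 0 < a ⟨0, lt_of_lt_of_le ht htn⟩ := hpos _ hi0t
    obtain ⟨l, hl, hdl⟩ := hyperplane_sub a c b d ⟨0, lt_of_lt_of_le ht htn⟩ ha0.ne'
      (fun x hx => (hmem x).1 ((h x).2 hx))
    -- |l| = 1
    have habs : ∀ j, |c j| = a (π.symm j) := by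
      intro j
      by_cases hj : ε (π.symm j) <;>
        simp [hc, hj, abs_of_nonneg (hanneg (π.symm j))]
    have hsumpos : 0 < ∑ i, a i := by
      have := Finset.single_le_sum (f := a) (fun i _ => hanneg i)
        (Finset.mem_univ (⟨0, lt_of_lt_of_le ht htn⟩ : Fin n))
      linarith
    have hlabs : |l| = 1 := by
      have h1 : ∑ j, |c j| = ∑ i, a i := by
        rw [Finset.sum_congr rfl fun j _ => habs j]
        exact Equiv.sum_comp π.symm a
      have h2 : ∑ j, |c j| = |l| * ∑ i, a i := by
        rw [Finset.mul_sum]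
        refine Finset.sum_congr rfl fun j _ => ?_
        rw [hl j, abs_mul, abs_of_nonneg (hanneg j)]
      refine mul_right_cancel₀ hsumpos.ne' ?_
      rw [one_mul, ← h2, h1]
    have hcpi : ∀ i, c (π i) = (if ε i then -(a i) else a i) := by
      intro i; simp [hc]
    have hl1 : l = 1 ∨ l = -1 := (abs_eq (by norm_num : (0:ℝ) ≤ 1)).1 hlabs
    rcases hl1 with hl1 | hl1
    · -- l = 1
      have key : ∀ i, (if ε i then -(a i) else a i) = a (π i) := by
        intro i
        have h3 := hl (π i)
        rw [hcpi i] at h3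
        rw [h3, hl1, one_mul]
      have hA : ∀ i, a (π i) = a i := by
        intro i
        have h3 := key i
        by_cases hb : ε i
        · rw [if_pos hb] at h3
          have h1 := hanneg i
          have h2 := hanneg (π i)
          linarith
        · rw [if_neg hb] at h3; linarith
      refine ⟨hA, Or.inl fun i hi => ?_⟩
      by_contra hb
      have hb' : ε i = true := by
        cases hεi : ε i
        · exact absurd hεi hb
        · rfl
      have h3 := key i
      rw [if_pos hb'] at h3
      have h1 := hpos i hi
      have h2 := hanneg (π i)
      linarith
    · -- l = -1
      have key : ∀ i, (if ε i then -(a i) else a i) = -(a (π i)) := by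
        intro i
        have h3 := hl (π i)
        rw [hcpi i] at h3
        rw [h3, hl1]; ring
      have hA : ∀ i, a (π i) = a i := by
        intro i
        have h3 := key i
        by_cases hb : ε i
        · rw [if_pos hb] at h3; linarith
        · rw [if_neg hb] at h3
          have h1 := hanneg i
          have h2 := hanneg (π i)
          linarith
      have hεT : ∀ i : Fin n, (i : ℕ) < t → ε i = true := by
        intro i hi
        by_contra hb
        have hb' : ε i = false := by
          cases hεi : ε i
          · rfl
          · exact absurd hεi hb
        have h3 := key i
        rw [hb', if_neg (by simp)] at h3
        have h1 := hpos i hi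
        have h2 : a (π i) = a i := hA i
        linarith
      refine ⟨hA, Or.inr ⟨?_, hεT⟩⟩
      -- d = -b gives sum = 2b
      have hsumε : ∑ i, (if ε i then a i else 0) = ∑ i, a i := by
        refine Finset.sum_congr rfl fun i _ => ?_
        by_cases hi : (i : ℕ) < t
        · rw [if_pos (hεT i hi)]
        · rw [hzero i (le_of_not_gt hi)]; simp
      have : d = -b := by rw [hdl, hl1]; ring
      rw [hd, hsumε] at this
      linarith
  · rintro ⟨hA, hB⟩ x
    rw [hmem x]
    simp only [Set.mem_setOf_eq]
    have hApre : ∀ j, a (π.symm j) = a j := by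
      intro j
      have h4 := hA (π.symm j)
      rw [π.apply_symm_apply] at h4
      exact h4.symm
    rcases hB with hB | ⟨h2b, hB⟩
    · -- all false on T
      have hε0 : ∀ i, ε i = true → a i = 0 := by
        intro i hi
        rcases lt_or_ge (i : ℕ) t with h | h
        · rw [hB i h] at hi; exact absurd hi (by simp)
        · exact hzero i h
      have hceq : ∀ j, c j = a j := by
        intro j
        by_cases hj : ε (π.symm j)
        · simp only [hc, if_pos hj]
          rw [hε0 _ hj, ← hApre j, hε0 _ hj]; ring
        · simp only [hc, if_neg hj]
          exact hApre j
      have hdeq : d = b := by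
        rw [hd]
        have : ∑ i, (if ε i then a i else 0) = 0 := by
          refine Finset.sum_eq_zero fun i _ => ?_
          by_cases hi : ε i
          · rw [if_pos hi]; exact hε0 i hi
          · rw [if_neg hi]
        rw [this]; ring
      rw [hdeq]
      constructor <;> intro h <;>
        [ { rw [← h]; exact Finset.sum_congr rfl fun j _ => by rw [hceq j] } ;
          { rw [← h]; exact Finset.sum_congr rfl fun j _ => by rw [hceq j] } ]
    · -- all true on T
      have hceq : ∀ j, c j = -(a j) := by
        intro j
        by_cases hj : ε (π.symm j)
        · simp only [hc, if_pos hj]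
          rw [hApre j]
        · simp only [hc, if_neg hj]
          rcases lt_or_ge ((π.symm j : Fin n) : ℕ) t with h | h
          · rw [hB _ h] at hj; exact absurd rfl hj
          · rw [hzero _ h] at *
            rw [← hApre j, hzero _ h]; ring
      have hdeq : d = -b := by
        rw [hd]
        have : ∑ i, (if ε i then a i else 0) = ∑ i, a i := by
          refine Finset.sum_congr rfl fun i _ => ?_
          by_cases hi : (i : ℕ) < t
          · rw [if_pos (hB i hi)]
          · rw [hzero i (le_of_not_gt hi)]; simp
        rw [this, h2b]; ring
      have hcs : ∑ j, c j * x j = -(∑ j, a j * x j) := by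
        rw [← Finset.sum_neg_distrib]
        exact Finset.sum_congr rfl fun j _ => by rw [hceq j]; ring
      rw [hcs, hdeq]
      constructor <;> intro h <;> linarith

variable {n t : ℕ}

def geEquiv (htn : t ≤ n) : {i : Fin n // t ≤ (i : ℕ)} ≃ Fin (n - t) where
  toFun x := ⟨(x.1 : ℕ) - t, by have := x.1.isLt; have := x.2; omega⟩
  invFun y := ⟨⟨(y : ℕ) + t, by have := y.isLt; omega⟩, by simp⟩
  left_inv x := by
    have := x.2
    apply Subtype.ext; apply Fin.ext; simp; omega
  right_inv y := by apply Fin.ext; simp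

lemma card_ge (htn : t ≤ n) : Fintype.card {i : Fin n // t ≤ (i : ℕ)} = n - t := by
  rw [Fintype.card_congr (geEquiv htn), Fintype.card_fin]

noncomputable def epsEquiv1 : {ε : Fin n → Bool // ∀ i : Fin n, (i : ℕ) < t → ε i = false} ≃
    ({i : Fin n // t ≤ (i : ℕ)} → Bool) where
  toFun ε := fun j => ε.1 j.1
  invFun g := ⟨fun i => if h : t ≤ (i : ℕ) then g ⟨i, h⟩ else false,
    fun i hi => dif_neg (by omega)⟩
  left_inv ε := by
    apply Subtype.ext; funext i
    by_cases h : t ≤ (i : ℕ)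
    · simp [dif_pos h]
    · simp [dif_neg h, (ε.2 i (by omega)).symm]
  right_inv g := by funext j; simp [dif_pos j.2]

lemma eps_count1 (htn : t ≤ n) :
    Nat.card {ε : Fin n → Bool // ∀ i : Fin n, (i : ℕ) < t → ε i = false} = 2 ^ (n - t) := by
  rw [Nat.card_congr epsEquiv1, Nat.card_eq_fintype_card, Fintype.card_fun, card_ge htn,
    Fintype.card_bool]

noncomputable def epsEquiv2 (hn : 0 < n) (ht : 1 ≤ t) :
    {ε : Fin n → Bool // (∀ i : Fin n, (i : ℕ) < t → ε i = false) ∨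
      (∀ i : Fin n, (i : ℕ) < t → ε i = true)} ≃
    (Bool × ({i : Fin n // t ≤ (i : ℕ)} → Bool)) where
  toFun ε := (ε.1 ⟨0, hn⟩, fun j => ε.1 j.1)
  invFun sg := ⟨fun i => if h : t ≤ (i : ℕ) then sg.2 ⟨i, h⟩ else sg.1, by
    rcases sg with ⟨s | s, g⟩
    · exact Or.inl fun i hi => dif_neg (by omega)
    · exact Or.inr fun i hi => dif_neg (by omega)⟩
  left_inv ε := by
    apply Subtype.ext; funext i
    by_cases h : t ≤ (i : ℕ)
    · simp [dif_pos h]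
    · simp only [dif_neg h]
      rcases ε.2 with h2 | h2
      · rw [h2 i (by omega), h2 ⟨0, hn⟩ (by simp; omega)]
      · rw [h2 i (by omega), h2 ⟨0, hn⟩ (by simp; omega)]
  right_inv sg := by
    obtain ⟨s, g⟩ := sg
    refine Prod.ext ?_ ?_
    · show (if h : t ≤ ((⟨0, hn⟩ : Fin n) : ℕ) then g ⟨⟨0, hn⟩, h⟩ else s) = s
      rw [dif_neg (by simp; omega)]
    · funext j
      show (if h : t ≤ (j.1 : ℕ) then g ⟨j.1, h⟩ else s) = g j
      rw [dif_pos j.2]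

lemma eps_count2 (hn : 0 < n) (ht : 1 ≤ t) (htn : t ≤ n) :
    Nat.card {ε : Fin n → Bool // (∀ i : Fin n, (i : ℕ) < t → ε i = false) ∨
      (∀ i : Fin n, (i : ℕ) < t → ε i = true)} = 2 ^ (n - t + 1) := by
  rw [Nat.card_congr (epsEquiv2 hn ht), Nat.card_eq_fintype_card, Fintype.card_prod,
    Fintype.card_fun, card_ge htn, Fintype.card_bool, pow_succ]
  ring

lemma perm_count (ht : 1 ≤ t) (htn : t ≤ n) (a : Fin n → ℝ)
    (hpos : ∀ i : Fin n, (i : ℕ) < t → 0 < a i)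
    (hzero : ∀ i : Fin n, t ≤ (i : ℕ) → a i = 0) :
    Nat.card {π : Equiv.Perm (Fin n) // ∀ i, a (π i) = a i} =
      Nat.factorial (n - t) *
        ∏ v ∈ (Finset.univ.filter fun i : Fin n => (i : ℕ) < t).image a,
          Nat.factorial
            (Finset.univ.filter fun i : Fin n => (i : ℕ) < t ∧ a i = v).card := by
  classical
  have h1 : Nat.card {π : Equiv.Perm (Fin n) // ∀ i, a (π i) = a i}
      = Fintype.card {g : Equiv.Perm (Fin n) // a ∘ g = a} := by
    rw [Nat.card_eq_fintype_card]
    exact Fintype.card_congr (Equiv.subtypeEquivRight fun g =>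
      ⟨fun h => funext h, fun h i => congrFun h i⟩)
  rw [h1, DomMulAct.stabilizer_card']
  -- fibers over positive values
  have hfib : ∀ v ∈ (Finset.univ.filter fun i : Fin n => (i : ℕ) < t).image a,
      Fintype.card {i : Fin n // a i = v} =
        (Finset.univ.filter fun i : Fin n => (i : ℕ) < t ∧ a i = v).card := by
    intro v hv
    obtain ⟨i0, hi0, rfl⟩ := Finset.mem_image.1 hv
    rw [Finset.mem_filter] at hi0
    have hvpos : 0 < a i0 := hpos i0 hi0.2
    rw [Fintype.card_subtype]
    congr 1
    apply Finset.filter_congr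
    intro i _
    constructor
    · intro h
      refine ⟨?_, h⟩
      by_contra hlt
      rw [hzero i (by omega)] at h
      exact absurd h.symm hvpos.ne'
    · exact fun h => h.2
  rcases eq_or_lt_of_le htn with rfl | htn'
  · -- t = n
    have hT : (Finset.univ.filter fun i : Fin t => (i : ℕ) < t) = Finset.univ := by
      refine Finset.filter_true_of_mem fun i _ => i.isLt
    rw [hT] at hfib ⊢
    rw [Nat.sub_self, Nat.factorial_zero, one_mul]
    exact Finset.prod_congr rfl fun v hv => by rw [hfib v hv]
  · -- t < n
    have h0mem : (0 : ℝ) ∈ Finset.univ.image a := by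
      refine Finset.mem_image.2 ⟨⟨t, htn'⟩, Finset.mem_univ _, hzero _ (by simp)⟩
    have h0not : (0 : ℝ) ∉ (Finset.univ.filter fun i : Fin n => (i : ℕ) < t).image a := by
      intro h
      obtain ⟨i, hi, h0⟩ := Finset.mem_image.1 h
      rw [Finset.mem_filter] at hi
      exact absurd h0 (hpos i hi.2).ne'
    have hI : Finset.univ.image a =
        insert (0 : ℝ) ((Finset.univ.filter fun i : Fin n => (i : ℕ) < t).image a) := by
      apply Finset.Subset.antisymm
      · intro v hv
        obtain ⟨i, _, rfl⟩ := Finset.mem_image.1 hv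
        rcases lt_or_ge (i : ℕ) t with h | h
        · exact Finset.mem_insert_of_mem
            (Finset.mem_image.2 ⟨i, Finset.mem_filter.2 ⟨Finset.mem_univ i, h⟩, rfl⟩)
        · rw [hzero i h]; exact Finset.mem_insert_self _ _
      · intro v hv
        rcases Finset.mem_insert.1 hv with rfl | hv
        · exact h0mem
        · obtain ⟨i, _, rfl⟩ := Finset.mem_image.1 hv
          exact Finset.mem_image_of_mem a (Finset.mem_univ i)
    rw [hI, Finset.prod_insert h0not]
    have hfib0 : Fintype.card {i : Fin n // a i = 0} = n - t := by
      rw [← card_ge htn]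
      apply Fintype.card_congr
      apply Equiv.subtypeEquivRight
      intro i
      constructor
      · intro h
        by_contra hlt
        exact absurd h (hpos i (by omega)).ne'
      · exact hzero i
    rw [hfib0]
    congr 1
    exact Finset.prod_congr rfl fun v hv => by rw [hfib v hv]


theorem stmt11' (n t : ℕ) (hn : 1 ≤ n) (ht : 1 ≤ t) (htn : t ≤ n)
    (a : Fin n → ℝ) (hpos : ∀ i : Fin n, (i : ℕ) < t → 0 < a i)
    (hzero : ∀ i : Fin n, t ≤ (i : ℕ) → a i = 0) (b : ℝ) :
    {p : Equiv.Perm (Fin n) × (Fin n → Bool) |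
        (fun x : Fin n → ℝ => fun i => if p.2 i then 1 - x (p.1 i) else x (p.1 i)) ''
          {x | ∑ i, a i * x i = b} = {x | ∑ i, a i * x i = b}}.ncard =
      Nat.factorial (n - t) *
        2 ^ (n - t + (if ∑ i, a i = 2 * b then 1 else 0)) *
        ∏ v ∈ (Finset.univ.filter fun i : Fin n => (i : ℕ) < t).image a,
          Nat.factorial
            (Finset.univ.filter fun i : Fin n => (i : ℕ) < t ∧ a i = v).card := by
  classical
  have hset : {p : Equiv.Perm (Fin n) × (Fin n → Bool) |
        (fun x : Fin n → ℝ => fun i => if p.2 i then 1 - x (p.1 i) else x (p.1 i)) ''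
          {x | ∑ i, a i * x i = b} = {x | ∑ i, a i * x i = b}} =
      ({π : Equiv.Perm (Fin n) | ∀ i, a (π i) = a i} ×ˢ
        {ε : Fin n → Bool | (∀ i : Fin n, (i : ℕ) < t → ε i = false) ∨
          (∑ i, a i = 2 * b ∧ ∀ i : Fin n, (i : ℕ) < t → ε i = true)}) := by
    ext p
    rw [Set.mem_prod]
    exact key_char ht htn a hpos hzero b p
  rw [hset, ← Nat.card_coe_set_eq, Nat.card_congr (Equiv.Set.prod _ _), Nat.card_prod]
  have hπ : Nat.card ↥{π : Equiv.Perm (Fin n) | ∀ i, a (π i) = a i} =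
      Nat.factorial (n - t) *
        ∏ v ∈ (Finset.univ.filter fun i : Fin n => (i : ℕ) < t).image a,
          Nat.factorial
            (Finset.univ.filter fun i : Fin n => (i : ℕ) < t ∧ a i = v).card :=
    perm_count ht htn a hpos hzero
  rw [hπ]
  by_cases hc : ∑ i, a i = 2 * b
  · have hε : {ε : Fin n → Bool | (∀ i : Fin n, (i : ℕ) < t → ε i = false) ∨
        (∑ i, a i = 2 * b ∧ ∀ i : Fin n, (i : ℕ) < t → ε i = true)} =
        {ε : Fin n → Bool | (∀ i : Fin n, (i : ℕ) < t → ε i = false) ∨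
          (∀ i : Fin n, (i : ℕ) < t → ε i = true)} := by
      ext ε; simp [hc]
    rw [hε, if_pos hc]
    have := eps_count2 (n := n) (t := t) hn ht htn
    rw [Set.coe_setOf]
    rw [this]
    ring
  · have hε : {ε : Fin n → Bool | (∀ i : Fin n, (i : ℕ) < t → ε i = false) ∨
        (∑ i, a i = 2 * b ∧ ∀ i : Fin n, (i : ℕ) < t → ε i = true)} =
        {ε : Fin n → Bool | ∀ i : Fin n, (i : ℕ) < t → ε i = false} := by
      ext ε; simp [hc]
    rw [hε, if_neg hc]
    have := eps_count1 (n := n) (t := t) htn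
    rw [Set.coe_setOf, this]
    ring

end Aux

/-- Equation (6.8): `|F(H)| = (n-t)! 2^(n-t+δ(H)) ∏ α_i!` for a spanned
hyperplane `H : a₁x₁ + ⋯ + aₜxₜ = b` of type `α`. -/
theorem stmt11 (n t : ℕ) (hn : 1 ≤ n) (ht : 1 ≤ t) (htn : t ≤ n)
    (a : Fin n → ℝ) (hpos : ∀ i : Fin n, (i : ℕ) < t → 0 < a i)
    (hzero : ∀ i : Fin n, t ≤ (i : ℕ) → a i = 0) (b : ℝ)
    (hspan : Module.finrank ℝ
      (affineSpan ℝ ({x : Fin n → ℝ | ∀ i, x i = 0 ∨ x i = 1} ∩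
        {x | ∑ i, a i * x i = b})).direction = n - 1) :
    {p : Equiv.Perm (Fin n) × (Fin n → Bool) |
        (fun x : Fin n → ℝ => fun i => if p.2 i then 1 - x (p.1 i) else x (p.1 i)) ''
          {x | ∑ i, a i * x i = b} = {x | ∑ i, a i * x i = b}}.ncard =
      Nat.factorial (n - t) *
        2 ^ (n - t + (if ∑ i, a i = 2 * b then 1 else 0)) *
        ∏ v ∈ (Finset.univ.filter fun i : Fin n => (i : ℕ) < t).image a,
          Nat.factorial
            (Finset.univ.filter fun i : Fin n => (i : ℕ) < t ∧ a i = v).card :=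
  stmt11' n t hn ht htn a hpos hzero b
end

section
/- Let t ≥ 1, let a : Fin t → ℕ, let π be a permutation of Fin t, and let b : ℕ. Then the number of functions x : Fin t → ℕ with x i ≤ 1 for all i, with x (π i) = x i for all i (x is fixed by π), and with ∑ i, a i * x i = b, equals the coefficient of X^b in the polynomial ∏_{o} (1 + X^{A_o}), where the product runs over the orbits o of π on Fin t and A_o = ∑_{i ∈ o} a i. -/
open Classical

namespace Stmt12Aux

variable {t : ℕ} (π : Equiv.Perm (Fin t))

noncomputable def orb (i : Fin t) : Finset (Fin t) :=
  Finset.univ.filter fun j => ∃ k : ℤ, (π ^ k) i = j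

lemma mem_orb {i j : Fin t} : j ∈ orb π i ↔ π.SameCycle i j := by
  simp [orb, Equiv.Perm.SameCycle]

lemma self_mem_orb (i : Fin t) : i ∈ orb π i :=
  (mem_orb π).2 (Equiv.Perm.SameCycle.refl π i)

lemma orb_eq_of_mem {i j : Fin t} (h : j ∈ orb π i) : orb π j = orb π i := by
  rw [mem_orb] at h
  ext m; rw [mem_orb, mem_orb]
  exact ⟨fun hm => h.trans hm, fun hm => h.symm.trans hm⟩

lemma fixed_nat {x : Fin t → ℕ} (hx : ∀ i, x (π i) = x i) (i : Fin t) (n : ℕ) :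
    x ((π ^ n) i) = x i := by
  induction n with
  | zero => rfl
  | succ n ih => rw [pow_succ', Equiv.Perm.mul_apply, hx, ih]

lemma fixed_const {x : Fin t → ℕ} (hx : ∀ i, x (π i) = x i) {i j : Fin t}
    (h : π.SameCycle i j) : x j = x i := by
  obtain ⟨k, rfl⟩ := h
  rcases k with n | n
  · simpa using fixed_nat π hx i n
  · rw [zpow_negSucc]
    have h2 := fixed_nat π hx ((π ^ (n + 1))⁻¹ i) (n + 1)
    rw [← Equiv.Perm.mul_apply, mul_inv_cancel, Equiv.Perm.one_apply] at h2
    exact h2.symm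

lemma biUnion_orb : (Finset.univ.image (orb π)).biUnion id = Finset.univ := by
  ext i
  simp only [Finset.mem_biUnion, Finset.mem_univ, iff_true]
  exact ⟨orb π i, Finset.mem_image_of_mem _ (Finset.mem_univ i), self_mem_orb π i⟩

lemma pairwiseDisjoint_orb :
    (↑(Finset.univ.image (orb π)) : Set (Finset (Fin t))).PairwiseDisjoint id := by
  intro o1 h1 o2 h2 hne
  simp only [Finset.coe_image, Set.mem_image, Finset.mem_coe] at h1 h2
  obtain ⟨i, -, rfl⟩ := h1
  obtain ⟨j, -, rfl⟩ := h2
  refine Finset.disjoint_left.2 fun m hm1 hm2 => hne ?_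
  rw [← orb_eq_of_mem π hm1, ← orb_eq_of_mem π hm2]

lemma sum_split (f : Fin t → ℕ) :
    ∑ i, f i = ∑ o ∈ Finset.univ.image (orb π), ∑ i ∈ o, f i := by
  conv_lhs => rw [← biUnion_orb π]
  exact Finset.sum_biUnion (pairwiseDisjoint_orb π)

end Stmt12Aux

open Stmt12Aux

/-- Theorem 6.4 (first case): the number of 0/1-vectors on the hyperplane
`∑ a_i x_i = b` fixed by the permutation `π` equals the coefficient of `X^b`
in `∏_{orbits o of π} (1 + X^{∑_{i ∈ o} a_i})`. -/
theorem stmt12 (t : ℕ) (ht : 1 ≤ t) (a : Fin t → ℕ)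
    (π : Equiv.Perm (Fin t)) (b : ℕ) :
    {x : Fin t → ℕ | (∀ i, x i ≤ 1) ∧ (∀ i, x (π i) = x i) ∧
        ∑ i, a i * x i = b}.ncard =
      Polynomial.coeff
        (∏ o ∈ Finset.univ.image
            (fun i : Fin t => Finset.univ.filter fun j => ∃ k : ℤ, (π ^ k) i = j),
          (1 + Polynomial.X ^ (∑ i ∈ o, a i)) : Polynomial ℕ) b := by
  have hO : (Finset.univ.image
      (fun i : Fin t => Finset.univ.filter fun j => ∃ k : ℤ, (π ^ k) i = j))
      = Finset.univ.image (orb π) := rfl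
  rw [hO]
  set O := Finset.univ.image (orb π) with hOdef
  set A : Finset (Fin t) → ℕ := fun o => ∑ i ∈ o, a i with hA
  set F : Finset (Finset (Finset (Fin t))) :=
    O.powerset.filter (fun S => ∑ o ∈ S, A o = b) with hF
  -- orbit membership facts
  have horbO : ∀ i : Fin t, orb π i ∈ O := fun i =>
    Finset.mem_image_of_mem _ (Finset.mem_univ i)
  have horb_of_mem : ∀ {o : Finset (Fin t)}, o ∈ O → ∀ {i : Fin t}, i ∈ o → orb π i = o := by
    intro o ho i hi
    rw [hOdef, Finset.mem_image] at ho
    obtain ⟨j, -, rfl⟩ := ho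
    exact orb_eq_of_mem π hi
  -- polynomial side
  have hpoly : Polynomial.coeff (∏ o ∈ O, ((1 : Polynomial ℕ) + Polynomial.X ^ A o)) b
      = F.card := by
    have h1 : (∏ o ∈ O, ((1 : Polynomial ℕ) + Polynomial.X ^ A o))
        = ∑ S ∈ O.powerset, Polynomial.X ^ (∑ o ∈ S, A o) := by
      have h2 := Finset.prod_add (fun o => (Polynomial.X : Polynomial ℕ) ^ A o) (fun _ => 1) O
      simp only [Finset.prod_const_one, mul_one] at h2
      calc (∏ o ∈ O, ((1 : Polynomial ℕ) + Polynomial.X ^ A o))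
          = ∏ o ∈ O, ((Polynomial.X : Polynomial ℕ) ^ A o + 1) :=
            Finset.prod_congr rfl fun o _ => add_comm _ _
        _ = ∑ S ∈ O.powerset, ∏ o ∈ S, (Polynomial.X : Polynomial ℕ) ^ A o := h2
        _ = ∑ S ∈ O.powerset, Polynomial.X ^ (∑ o ∈ S, A o) :=
            Finset.sum_congr rfl fun S _ => by rw [Finset.prod_pow_eq_pow_sum]
    rw [h1, Polynomial.finset_sum_coeff]
    simp only [Polynomial.coeff_X_pow]
    rw [hF, Finset.card_filter]
    exact Finset.sum_congr rfl fun S _ => if_congr eq_comm rfl rfl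
  rw [hpoly]
  -- set side
  set g : Finset (Finset (Fin t)) → (Fin t → ℕ) :=
    fun S i => if orb π i ∈ S then 1 else 0 with hg
  have hsum : ∀ (x : Fin t → ℕ), ∑ i, a i * x i = ∑ o ∈ O, ∑ i ∈ o, a i * x i :=
    fun x => sum_split π _
  have hset : {x : Fin t → ℕ | (∀ i, x i ≤ 1) ∧ (∀ i, x (π i) = x i) ∧
      ∑ i, a i * x i = b} = g '' ↑F := by
    ext x
    simp only [Set.mem_setOf_eq, Set.mem_image, Finset.mem_coe]
    constructor
    · rintro ⟨hle, hfix, hsumb⟩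
      refine ⟨O.filter (fun o => ∃ i ∈ o, x i = 1), ?_, ?_⟩
      · rw [hF, Finset.mem_filter]
        refine ⟨Finset.mem_powerset.2 (Finset.filter_subset _ _), ?_⟩
        have key : ∀ o ∈ O, (∑ i ∈ o, a i * x i)
            = if o ∈ O.filter (fun o => ∃ i ∈ o, x i = 1) then A o else 0 := by
          intro o ho
          by_cases hcase : ∃ i ∈ o, x i = 1
          · obtain ⟨i₀, hi₀, hx₀⟩ := hcase
            rw [if_pos (Finset.mem_filter.2 ⟨ho, ⟨i₀, hi₀, hx₀⟩⟩), hA]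
            refine Finset.sum_congr rfl fun i hi => ?_
            have hxi : x i = x i₀ := by
              rw [← horb_of_mem ho hi₀, mem_orb] at hi
              exact fixed_const π hfix hi
            rw [hxi, hx₀, mul_one]
          · have hno : o ∉ Finset.filter (fun o => ∃ i ∈ o, x i = 1) O :=
              fun hmem => hcase (Finset.mem_filter.1 hmem).2
            rw [if_neg hno]
            refine Finset.sum_eq_zero fun i hi => ?_
            have hxi : x i = 0 := by
              have h1 := hle i
              rcases Nat.lt_or_ge (x i) 1 with h | h
              · omega
              · exact absurd ⟨i, hi, le_antisymm h1 h⟩ hcase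
            rw [hxi, mul_zero]
        rw [← hsumb, hsum x, Finset.sum_congr rfl key, ← Finset.sum_filter]
        congr 1
        ext o
        simp only [Finset.mem_filter]
        tauto
      · funext i
        rw [hg]
        simp only [Finset.mem_filter]
        by_cases hxi : x i = 1
        · rw [if_pos ⟨horbO i, i, self_mem_orb π i, hxi⟩, hxi]
        · have hx0 : x i = 0 := by have := hle i; omega
          rw [hx0, if_neg]
          rintro ⟨-, j, hj, hxj⟩
          rw [mem_orb] at hj
          rw [fixed_const π hfix hj, hx0] at hxj
          exact absurd hxj zero_ne_one
    · rintro ⟨S, hS, rfl⟩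
      rw [hF, Finset.mem_filter, Finset.mem_powerset] at hS
      obtain ⟨hSO, hSb⟩ := hS
      refine ⟨fun i => by rw [hg]; dsimp only; split <;> omega,
        fun i => ?_, ?_⟩
      · rw [hg]
        dsimp only
        have heq : orb π (π i) = orb π i :=
          orb_eq_of_mem π ((mem_orb π).2 ⟨1, by simp⟩)
        rw [heq]
      · rw [hsum]
        have key : ∀ o ∈ O, (∑ i ∈ o, a i * g S i) = if o ∈ S then A o else 0 := by
          intro o ho
          by_cases hoS : o ∈ S
          · rw [if_pos hoS, hA]
            refine Finset.sum_congr rfl fun i hi => ?_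
            rw [hg]
            dsimp only
            rw [horb_of_mem ho hi, if_pos hoS, mul_one]
          · rw [if_neg hoS]
            refine Finset.sum_eq_zero fun i hi => ?_
            rw [hg]
            dsimp only
            rw [horb_of_mem ho hi, if_neg hoS, mul_zero]
        rw [Finset.sum_congr rfl key, ← Finset.sum_filter,
          Finset.filter_mem_eq_inter, Finset.inter_eq_right.2 hSO, hSb]
  have hinj : Set.InjOn g ↑F := by
    intro S hS S' hS' hgg
    rw [Finset.mem_coe, hF, Finset.mem_filter, Finset.mem_powerset] at hS hS'
    ext o
    constructor
    · intro ho
      obtain ⟨i, -, rfl⟩ := Finset.mem_image.1 (hS.1 ho)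
      have h1 : g S i = 1 := by rw [hg]; exact if_pos ho
      rw [hgg] at h1
      by_contra hc
      rw [hg] at h1
      simp only [if_neg hc] at h1
      exact zero_ne_one h1
    · intro ho
      obtain ⟨i, -, rfl⟩ := Finset.mem_image.1 (hS'.1 ho)
      have h1 : g S' i = 1 := by rw [hg]; exact if_pos ho
      rw [← hgg] at h1
      by_contra hc
      rw [hg] at h1
      simp only [if_neg hc] at h1
      exact zero_ne_one h1
  rw [hset, Set.ncard_image_of_injOn hinj, Set.ncard_coe_finset]
end

section
/- Let t ≥ 1 and let π be a permutation of Fin t. Then the number of functions x : Fin t → ℝ with x i ∈ {0, 1} for all i and satisfying x i = 1 - x (π i) for all i equals 2^c if every orbit of π on Fin t has even cardinality (where c is the number of orbits of π on Fin t), and equals 0 if some orbit of π has odd cardinality. -/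
open Classical

namespace Stmt13Aux

variable {t : ℕ} (π : Equiv.Perm (Fin t))

lemma pd (i : Fin t) : i ∈ Function.periodicPts ⇑π :=
  ⟨orderOf π, orderOf_pos π, by
    simp only [Function.IsPeriodicPt, Function.IsFixedPt, Equiv.Perm.iterate_eq_pow,
      pow_orderOf_eq_one]
    rfl⟩

lemma np (i : Fin t) : 0 < Function.minimalPeriod ⇑π i :=
  Function.minimalPeriod_pos_of_mem_periodicPts (pd π i)

lemma sc_iff (i j : Fin t) :
    π.SameCycle i j ↔ ∃ k < Function.minimalPeriod ⇑π i, (π ^ k) i = j := by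
  constructor
  · rintro h
    obtain ⟨k, -, hk⟩ := h.exists_pow_eq'
    refine ⟨k % Function.minimalPeriod ⇑π i, Nat.mod_lt _ (np π i), ?_⟩
    rw [← hk, ← Equiv.Perm.iterate_eq_pow, ← Equiv.Perm.iterate_eq_pow,
      Function.iterate_mod_minimalPeriod_eq]
  · rintro ⟨k, -, hk⟩
    exact ⟨(k : ℤ), by rw [zpow_natCast]; exact hk⟩

lemma card_orbit (i : Fin t) :
    (Finset.univ.filter fun j => ∃ k : ℤ, (π ^ k) i = j).card
      = Function.minimalPeriod ⇑π i := by
  have he : (Finset.univ.filter fun j => ∃ k : ℤ, (π ^ k) i = j)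
      = (Finset.range (Function.minimalPeriod ⇑π i)).image fun k => (π ^ k) i := by
    ext j
    simp only [Finset.mem_filter, Finset.mem_univ, true_and, Finset.mem_image,
      Finset.mem_range]
    exact ⟨fun hx => by obtain ⟨k, hk1, hk2⟩ := (sc_iff π i j).mp hx; exact ⟨k, hk1, hk2⟩,
      fun ⟨k, hk1, hk2⟩ => (sc_iff π i j).mpr ⟨k, hk1, hk2⟩⟩
  rw [he, Finset.card_image_of_injOn, Finset.card_range]
  intro a ha b hb hab
  exact Function.iterate_injOn_Iio_minimalPeriod (f := ⇑π) (x := i)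
    (by simpa using ha) (by simpa using hb) (by simpa [← Equiv.Perm.coe_pow] using hab)

lemma parity {r : Fin t} (he : Even (Function.minimalPeriod ⇑π r)) {a b : ℕ}
    (h : (π ^ a) r = (π ^ b) r) : Odd a ↔ Odd b := by
  wlog hab : a ≤ b generalizing a b
  · exact (this h.symm (le_of_not_ge hab)).symm
  have h3 : (π ^ (b - a)) r = r := by
    apply (π ^ a).injective
    calc (π ^ a) ((π ^ (b - a)) r) = (π ^ (a + (b - a))) r := by
          rw [pow_add, Equiv.Perm.mul_apply]
      _ = (π ^ b) r := by rw [Nat.add_sub_cancel' hab]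
      _ = (π ^ a) r := h.symm
  have hdvd : Function.minimalPeriod ⇑π r ∣ (b - a) :=
    Function.IsPeriodicPt.minimalPeriod_dvd (by
      simpa [Function.IsPeriodicPt, Function.IsFixedPt, ← Equiv.Perm.coe_pow] using h3)
  have hev : Even (b - a) := (even_iff_two_dvd.mpr (he.two_dvd.trans hdvd))
  rw [Nat.even_sub hab] at hev
  simp only [Nat.not_even_iff_odd.symm]
  tauto

lemma alt {y : Fin t → Bool} (hy : ∀ i, y i = !y (π i)) (r : Fin t) (k : ℕ) :
    y ((π ^ k) r) = if Odd k then !(y r) else y r := by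
  induction k with
  | zero => simp
  | succ k ih =>
    have h1 : (π ^ (k + 1)) r = π ((π ^ k) r) := by
      rw [pow_succ', Equiv.Perm.mul_apply]
    have h2 : y (π ((π ^ k) r)) = !(y ((π ^ k) r)) := by
      rw [hy ((π ^ k) r), Bool.not_not]
    rw [h1, h2, ih]
    by_cases hk : Odd k
    · simp [Nat.odd_add_one, hk, Nat.not_even_iff_odd.mpr hk]
    · simp [Nat.odd_add_one, hk, Nat.not_odd_iff_even.mp hk]

lemma orbit_eq {i j : Fin t} (h : π.SameCycle i j) :
    (Finset.univ.filter fun x => ∃ k : ℤ, (π ^ k) i = x)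
      = Finset.univ.filter fun x => ∃ k : ℤ, (π ^ k) j = x := by
  ext x
  simp only [Finset.mem_filter, Finset.mem_univ, true_and]
  exact ⟨fun hx => h.symm.trans hx, fun hx => h.trans hx⟩

end Stmt13Aux

/-- Theorem 6.4 (second case, counting part): the number of 0/1-vectors fixed
by the all-negative signed permutation with underlying permutation `π` is
`2^(number of orbits)` if all orbits of `π` are even, and `0` otherwise. -/
theorem stmt13 (t : ℕ) (ht : 1 ≤ t) (π : Equiv.Perm (Fin t)) :
    {x : Fin t → ℝ | (∀ i, x i = 0 ∨ x i = 1) ∧ ∀ i, x i = 1 - x (π i)}.ncard =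
      if ∀ o ∈ Finset.univ.image
          (fun i : Fin t => Finset.univ.filter fun j => ∃ k : ℤ, (π ^ k) i = j),
          Even o.card
      then 2 ^ (Finset.univ.image
          (fun i : Fin t => Finset.univ.filter fun j => ∃ k : ℤ, (π ^ k) i = j)).card
      else 0 := by
  classical
  set O := Finset.univ.image
      (fun i : Fin t => Finset.univ.filter fun j => ∃ k : ℤ, (π ^ k) i = j) with hOdef
  set T : Set (Fin t → Bool) := {y | ∀ i, y i = !y (π i)} with hTdef
  set φ : (Fin t → Bool) → (Fin t → ℝ) := fun y i => if y i then 1 else 0 with hφdef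
  have hφinj : Function.Injective φ := by
    intro y z h
    funext i
    have hi := congrFun h i
    by_cases hy : y i <;> by_cases hz : z i <;>
      simp [hφdef, hy, hz] at hi ⊢
  have hS : {x : Fin t → ℝ | (∀ i, x i = 0 ∨ x i = 1) ∧ ∀ i, x i = 1 - x (π i)}
      = φ '' T := by
    ext x
    constructor
    · rintro ⟨h01, halt⟩
      refine ⟨fun i => decide (x i = 1), fun i => ?_, ?_⟩
      · -- membership in T
        rcases h01 (π i) with hp | hp
        · have : x i = 1 := by rw [halt i, hp]; ring
          simp [this, hp]
        · have : x i = 0 := by rw [halt i, hp]; ring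
          simp [this, hp]
      · funext i
        rcases h01 i with hp | hp <;> simp [hφdef, hp]
    · rintro ⟨y, hy, rfl⟩
      constructor
      · intro i
        by_cases h : y i <;> simp [hφdef, h]
      · intro i
        have := hy i
        by_cases h : y (π i) <;> simp [h] at this <;> simp [hφdef, h, this]
  rw [hS, Set.ncard_image_of_injective T hφinj, ← Nat.card_coe_set_eq]
  by_cases hcond : ∀ o ∈ O, Even o.card
  · -- all orbits even
    rw [if_pos hcond]
    have hev : ∀ i : Fin t, Even (Function.minimalPeriod ⇑π i) := by
      intro i
      have := hcond _ (Finset.mem_image_of_mem _ (Finset.mem_univ i))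
      rwa [Stmt13Aux.card_orbit] at this
    -- representatives
    have hrepex : ∀ o : {o // o ∈ O}, ∃ i : Fin t,
        (Finset.univ.filter fun j => ∃ k : ℤ, (π ^ k) i = j) = o.1 := by
      intro o
      obtain ⟨i, -, hi⟩ := Finset.mem_image.mp o.2
      exact ⟨i, hi⟩
    choose rep hrep using hrepex
    set oj : Fin t → {o // o ∈ O} :=
      fun j => ⟨_, Finset.mem_image_of_mem _ (Finset.mem_univ j)⟩ with hojdef
    have hscrep : ∀ j : Fin t, π.SameCycle (rep (oj j)) j := by
      intro j
      have hj : j ∈ (Finset.univ.filter fun x => ∃ k : ℤ, (π ^ k) (rep (oj j)) = x) := by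
        rw [hrep (oj j)]
        exact Finset.mem_filter.mpr ⟨Finset.mem_univ _, ⟨0, rfl⟩⟩
      exact (Finset.mem_filter.mp hj).2
    have hex : ∀ j : Fin t, ∃ k : ℕ, (π ^ k) (rep (oj j)) = j := by
      intro j
      obtain ⟨k, -, hk⟩ := (Stmt13Aux.sc_iff π _ j).mp (hscrep j)
      exact ⟨k, hk⟩
    choose kk hkk using hex
    have hojrep : ∀ o : {o // o ∈ O}, oj (rep o) = o := fun o => Subtype.ext (hrep o)
    have hkkrep : ∀ o : {o // o ∈ O}, ¬ Odd (kk (rep o)) := by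
      intro o
      have h1 : (π ^ kk (rep o)) (rep o) = rep o := by
        have := hkk (rep o)
        rwa [hojrep o] at this
      have hdvd : Function.minimalPeriod ⇑π (rep o) ∣ kk (rep o) :=
        Function.IsPeriodicPt.minimalPeriod_dvd (by
          simpa [Function.IsPeriodicPt, Function.IsFixedPt, ← Equiv.Perm.coe_pow] using h1)
      have : Even (kk (rep o)) := (even_iff_two_dvd.mpr ((hev (rep o)).two_dvd.trans hdvd))
      exact Nat.not_odd_iff_even.mpr this
    set F : ↥T → ({o // o ∈ O} → Bool) := fun y o => y.1 (rep o) with hFdef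
    have hbij : Function.Bijective F := by
      constructor
      · intro y z h
        apply Subtype.ext
        funext j
        have h1 := congrFun h (oj j)
        simp only [hFdef] at h1
        rw [← hkk j, Stmt13Aux.alt π y.2 (rep (oj j)) (kk j),
          Stmt13Aux.alt π z.2 (rep (oj j)) (kk j), h1]
      · intro b
        set y : Fin t → Bool :=
          fun j => if Odd (kk j) then !(b (oj j)) else b (oj j) with hydef
        have hyT : y ∈ T := by
          intro j
          have hoj : oj (π j) = oj j :=
            Subtype.ext (Stmt13Aux.orbit_eq π ⟨1, by simp⟩).symm
          have hk2 : (π ^ kk (π j)) (rep (oj j)) = π j := by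
            have := hkk (π j)
            rwa [hoj] at this
          have hk1 : (π ^ (kk j + 1)) (rep (oj j)) = π j := by
            rw [pow_succ', Equiv.Perm.mul_apply, hkk j]
          have hpar : Odd (kk (π j)) ↔ ¬ Odd (kk j) := by
            rw [Stmt13Aux.parity π (hev (rep (oj j))) (hk2.trans hk1.symm)]
            simp [Nat.odd_add_one, Nat.not_odd_iff_even]
          show (if Odd (kk j) then !(b (oj j)) else b (oj j))
            = !(if Odd (kk (π j)) then !(b (oj (π j))) else b (oj (π j)))
          rw [hoj]
          by_cases h : Odd (kk j)
          · have hn : ¬ Odd (kk (π j)) := fun hc => (hpar.mp hc) h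
            simp [h, hn]
          · have hn : Odd (kk (π j)) := hpar.mpr h
            simp [h, hn]
        refine ⟨⟨y, hyT⟩, ?_⟩
        funext o
        show y (rep o) = b o
        simp only [hydef]
        rw [if_neg (hkkrep o), hojrep o]
    rw [Nat.card_eq_of_bijective F hbij, Nat.card_eq_fintype_card, Fintype.card_fun,
      Fintype.card_bool, Fintype.card_coe]
  · -- some orbit odd
    rw [if_neg hcond]
    push_neg at hcond
    obtain ⟨o, ho, hodd⟩ := hcond
    obtain ⟨i, -, rfl⟩ := Finset.mem_image.mp ho
    rw [Stmt13Aux.card_orbit] at hodd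
    have hoddn : Odd (Function.minimalPeriod ⇑π i) := Nat.not_even_iff_odd.mp hodd
    have hTempty : T = ∅ := by
      ext y
      simp only [Set.mem_empty_iff_false, iff_false]
      intro hy
      have hfix : (π ^ Function.minimalPeriod ⇑π i) i = i := by
        exact Function.isPeriodicPt_minimalPeriod ⇑π i
      have := Stmt13Aux.alt π hy i (Function.minimalPeriod ⇑π i)
      rw [hfix, if_pos hoddn] at this
      simp at this
    rw [hTempty]
    simp
end

section
/- Let n ≥ 1 and 2^(n-2) < k. Let P and P' be subsets of {0,1}^n ⊆ (Fin n → ℝ) with |P| = k and more than 2^(n-2) elements each, let H and H' be affine hyperplanes in ℝ^n (affine subspaces whose directions have dimension n-1) with P ⊆ H and P' ⊆ H', and let f : (Fin n → ℝ) → (Fin n → ℝ) be a signed permutation symmetry (given by a permutation π of Fin n and ε : Fin n → Bool via (f x) i = x(π i) if ε i = false and 1 - x(π i) if ε i = true) such that f '' P = P'. Then f maps H onto H', i.e., f '' H = H'. -/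
open Module Set

/-- A set of 0/1 vectors has at most `2 ^ d` elements, where `d` is the dimension of its
affine span. -/
lemma cube_ncard_le (n : ℕ) (S : Set (Fin n → ℝ))
    (hS : ∀ x ∈ S, ∀ i, x i = 0 ∨ x i = 1) :
    S.ncard ≤ 2 ^ Module.finrank ℝ (affineSpan ℝ S).direction := by
  classical
  set V : Submodule ℝ (Fin n → ℝ) := (affineSpan ℝ S).direction with hV
  -- coordinate functionals restricted to V
  set f : Fin n → Module.Dual ℝ V := fun i => (LinearMap.proj i).comp V.subtype with hfdef
  obtain ⟨b, hbsub, hbspan, hbli⟩ := exists_linearIndependent ℝ (Set.range f)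
  have hbfin : b.Finite := hbli.set_finite_of_isNoetherian
  haveI : Fintype b := hbfin.fintype
  have hbcard : Fintype.card b ≤ Module.finrank ℝ V := by
    have := hbli.fintype_card_le_finrank
    rwa [Subspace.dual_finrank_eq] at this
  -- choice of coordinates realizing the functionals in b
  have hc : ∀ φ : b, ∃ i : Fin n, f i = (φ : Module.Dual ℝ V) := fun φ => hbsub φ.2
  choose c hcspec using hc
  -- the map recording the 0/1 pattern on these coordinates is injective on S
  have hinj : Function.Injective (fun x : S => fun φ : b => decide ((x : Fin n → ℝ) (c φ) = 1)) := by
    rintro ⟨x, hx⟩ ⟨y, hy⟩ hxy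
    have hxyc : ∀ φ : b, x (c φ) = y (c φ) := by
      intro φ
      have h1 := congrFun hxy φ
      simp only at h1
      rcases hS x hx (c φ) with h2 | h2 <;> rcases hS y hy (c φ) with h3 | h3 <;>
        simp [h2, h3] at h1 ⊢
    have hvmem : x - y ∈ V := by
      have := AffineSubspace.vsub_mem_direction (subset_affineSpan ℝ S hx)
        (subset_affineSpan ℝ S hy)
      simpa [vsub_eq_sub] using this
    set v : V := ⟨x - y, hvmem⟩ with hvdef
    have hbker : b ⊆ (LinearMap.ker ((LinearMap.applyₗ v : Module.Dual ℝ V →ₗ[ℝ] ℝ)) : Set (Module.Dual ℝ V)) := by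
      intro φ hφ
      have h2 : f (c ⟨φ, hφ⟩) = φ := hcspec ⟨φ, hφ⟩
      simp only [LinearMap.mem_ker, SetLike.mem_coe, LinearMap.applyₗ_apply_apply]
      rw [← h2]
      simp only [hfdef, LinearMap.comp_apply, LinearMap.proj_apply, hvdef,
        Submodule.subtype_apply]
      have := hxyc ⟨φ, hφ⟩
      simp [this]
    have hspanker : Submodule.span ℝ b ≤
        LinearMap.ker ((LinearMap.applyₗ v : Module.Dual ℝ V →ₗ[ℝ] ℝ)) :=
      Submodule.span_le.mpr hbker
    have hall : ∀ i : Fin n, f i v = 0 := by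
      intro i
      have hmem : f i ∈ Submodule.span ℝ (Set.range f) := Submodule.subset_span ⟨i, rfl⟩
      rw [← hbspan] at hmem
      have := hspanker hmem
      simpa using this
    have : x = y := by
      funext i
      have := hall i
      simp only [hfdef, LinearMap.comp_apply, LinearMap.proj_apply, hvdef,
        Submodule.subtype_apply] at this
      have : x i - y i = 0 := this
      linarith
    exact Subtype.ext this
  have hcard : S.ncard ≤ 2 ^ Fintype.card b := by
    rw [← Nat.card_coe_set_eq]
    calc Nat.card S ≤ Nat.card (b → Bool) := Nat.card_le_card_of_injective _ hinj
      _ = 2 ^ Fintype.card b := by simp [Nat.card_eq_fintype_card]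
  exact hcard.trans (Nat.pow_le_pow_right (by norm_num) hbcard)

/-- The linear part of a signed permutation symmetry. -/
noncomputable def sgnLin (n : ℕ) (π : Equiv.Perm (Fin n)) (ε : Fin n → Bool) :
    (Fin n → ℝ) →ₗ[ℝ] (Fin n → ℝ) where
  toFun := fun x i => if ε i then -(x (π i)) else x (π i)
  map_add' := by intro x y; funext i; by_cases h : ε i <;> simp [h] <;> ring
  map_smul' := by intro c x; funext i; by_cases h : ε i <;> simp [h]

/-- A signed permutation symmetry as an affine map. -/
noncomputable def sgnAff (n : ℕ) (π : Equiv.Perm (Fin n)) (ε : Fin n → Bool) :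
    (Fin n → ℝ) →ᵃ[ℝ] (Fin n → ℝ) where
  toFun := fun x i => if ε i then 1 - x (π i) else x (π i)
  linear := sgnLin n π ε
  map_vadd' := by
    intro p v
    funext i
    by_cases h : ε i <;> simp [h, sgnLin] <;> ring

/-- Case 2 in the proof of Theorem 4.1: a hypercube symmetry carrying a large
vertex set `P ⊆ H` onto `P' ⊆ H'` carries the hyperplane `H` onto `H'`. -/
theorem stmt15 (n k : ℕ) (hn : 1 ≤ n) (hk : 2 ^ (n - 2) < k)
    (P P' : Set (Fin n → ℝ))
    (hP : ∀ x ∈ P, ∀ i, x i = 0 ∨ x i = 1)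
    (hP' : ∀ x ∈ P', ∀ i, x i = 0 ∨ x i = 1)
    (hPcard : P.ncard = k) (hP'card : 2 ^ (n - 2) < P'.ncard)
    (H H' : AffineSubspace ℝ (Fin n → ℝ))
    (hH : Module.finrank ℝ H.direction = n - 1)
    (hH' : Module.finrank ℝ H'.direction = n - 1)
    (hPH : P ⊆ (H : Set (Fin n → ℝ))) (hPH' : P' ⊆ (H' : Set (Fin n → ℝ)))
    (π : Equiv.Perm (Fin n)) (ε : Fin n → Bool)
    (hf : (fun x : Fin n → ℝ => fun i => if ε i then 1 - x (π i) else x (π i)) ''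
        P = P') :
    (fun x : Fin n → ℝ => fun i => if ε i then 1 - x (π i) else x (π i)) ''
        (H : Set (Fin n → ℝ)) = (H' : Set (Fin n → ℝ)) := by
  classical
  -- the sets are large, hence their affine spans are the hyperplanes
  have key : ∀ (Q : Set (Fin n → ℝ)) (K : AffineSubspace ℝ (Fin n → ℝ)),
      (∀ x ∈ Q, ∀ i, x i = 0 ∨ x i = 1) → 2 ^ (n - 2) < Q.ncard →
      Module.finrank ℝ K.direction = n - 1 → Q ⊆ (K : Set (Fin n → ℝ)) →
      affineSpan ℝ Q = K := by
    intro Q K hQ01 hQcard hKdim hQK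
    have hle : affineSpan ℝ Q ≤ K := affineSpan_le.mpr hQK
    have hdirle : (affineSpan ℝ Q).direction ≤ K.direction :=
      AffineSubspace.direction_le hle
    have hQne : Q.Nonempty := Set.nonempty_of_ncard_ne_zero
      (lt_of_le_of_lt (Nat.zero_le _) hQcard).ne'
    have hdim : Module.finrank ℝ (affineSpan ℝ Q).direction = n - 1 := by
      refine le_antisymm (hKdim ▸ Submodule.finrank_mono hdirle) ?_
      by_contra hlt
      push_neg at hlt
      have h1 : Module.finrank ℝ (affineSpan ℝ Q).direction ≤ n - 2 := by omega
      have h2 : Q.ncard ≤ 2 ^ (n - 2) :=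
        (cube_ncard_le n Q hQ01).trans (Nat.pow_le_pow_right (by norm_num) h1)
      exact absurd hQcard (not_lt.mpr h2)
    have hdireq : (affineSpan ℝ Q).direction = K.direction :=
      Submodule.eq_of_le_of_finrank_eq hdirle (hdim.trans hKdim.symm)
    obtain ⟨p, hp⟩ := hQne
    exact (AffineSubspace.eq_iff_direction_eq_of_mem
      (subset_affineSpan ℝ Q hp) (hQK hp)).mpr hdireq
  have hk0 : 0 < k := lt_of_le_of_lt (Nat.zero_le _) hk
  have hPne : P.Nonempty := Set.nonempty_of_ncard_ne_zero (by omega)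
  have hspanP : affineSpan ℝ P = H := key P H hP (by omega) hH hPH
  have hspanP' : affineSpan ℝ P' = H' := key P' H' hP' hP'card hH' hPH'
  have hAcoe : ⇑(sgnAff n π ε) =
      (fun x : Fin n → ℝ => fun i => if ε i then 1 - x (π i) else x (π i)) := rfl
  calc (fun x : Fin n → ℝ => fun i => if ε i then 1 - x (π i) else x (π i)) ''
        (H : Set (Fin n → ℝ))
      = ⇑(sgnAff n π ε) '' (affineSpan ℝ P : Set (Fin n → ℝ)) := by rw [hAcoe, hspanP]
    _ = ((affineSpan ℝ P).map (sgnAff n π ε) : Set (Fin n → ℝ)) :=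
        (AffineSubspace.coe_map _ _).symm
    _ = (affineSpan ℝ (⇑(sgnAff n π ε) '' P) : Set (Fin n → ℝ)) := by
        rw [AffineSubspace.map_span]
    _ = (H' : Set (Fin n → ℝ)) := by rw [hAcoe, hf, hspanP']
end
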